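/- arXiv:1602.08850 — 10 statements merged into one kernel-verified Lean document; each statement's English description precedes it below -/
import Mathlib

section
/- Let Ω ⊂ ℝ^d be a bounded measurable set of positive measure, and set f(x) := |𝟙̂_Ω(x)|² / |Ω|². Then for a discrete set Λ ⊂ ℝ^d, the exponential system E(Λ) is orthogonal in L²(Ω) if and only if f + Λ is a packing, i.e., ∑_{λ∈Λ} f(x − λ) ≤ 1 for almost every x ∈ ℝ^d. -/
open MeasureTheory Complex Set
open scoped Pointwise ENNReal RealInnerProductSpace

noncomputable section

/-- Euclidean space `ℝ^d`. -/
abbrev Ed (d : ℕ) := EuclideanSpace ℝ (Fin d)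

/-- The exponential function `e_λ(x) = exp(2πi⟨λ,x⟩)` on `ℝ^d`. -/
def expF {d : ℕ} (l x : Ed d) : ℂ :=
  Complex.exp (2 * Real.pi * Complex.I * Complex.ofReal (inner ℝ l x : ℝ))

/-- The Fourier transform of the indicator function of `Ω ⊆ ℝ^d`. -/
def ftInd {d : ℕ} (Om : Set (Ed d)) (xi : Ed d) : ℂ :=
  ∫ x in Om, Complex.exp (-(2 * Real.pi * Complex.I * Complex.ofReal (inner ℝ xi x : ℝ)))

/-- The exponential system `E(Λ)` is orthogonal in `L²(Ω)`. -/
def IsOrthSys {d : ℕ} (Om L : Set (Ed d)) : Prop :=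
  ∀ l ∈ L, ∀ m ∈ L, l ≠ m →
    ∫ x in Om, expF l x * (starRingEnd ℂ) (expF m x) = 0

/-- `Λ` is a spectrum for `Ω`: the system `E(Λ)` is orthogonal and complete in `L²(Ω)`. -/
def IsSpectrum {d : ℕ} (Om L : Set (Ed d)) : Prop :=
  IsOrthSys Om L ∧
  ∀ f : Ed d → ℂ, MemLp f 2 (volume.restrict Om) →
    (∀ l ∈ L, ∫ x in Om, f x * (starRingEnd ℂ) (expF l x) = 0) →
    f =ᵐ[volume.restrict Om] 0

/-- `f + Λ` is a tiling: `∑_{λ∈Λ} f(x-λ) = 1` a.e. -/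
def IsTiling {E : Type*} [NormedAddCommGroup E] [MeasureSpace E]
    (f : E → ℝ) (L : Set E) : Prop :=
  ∀ᵐ x : E, ∑' l : L, ENNReal.ofReal (f (x - (l : E))) = 1

/-- `f + Λ` is a packing: `∑_{λ∈Λ} f(x-λ) ≤ 1` a.e. -/
def IsPacking {E : Type*} [NormedAddCommGroup E] [MeasureSpace E]
    (f : E → ℝ) (L : Set E) : Prop :=
  ∀ᵐ x : E, ∑' l : L, ENNReal.ofReal (f (x - (l : E))) ≤ 1

/-- `Λ` is uniformly discrete with separation constant at least `δ`. -/
def UnifDiscrete {E : Type*} [PseudoMetricSpace E] (L : Set E) (δ : ℝ) : Prop :=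
  ∀ l ∈ L, ∀ m ∈ L, l ≠ m → δ ≤ dist l m

/-- Weak convergence of a sequence of uniformly discrete sets. -/
def WeakLim {E : Type*} [SeminormedAddCommGroup E] (Ln : ℕ → Set E) (L : Set E) : Prop :=
  ∀ ε > (0 : ℝ), ∀ R > (0 : ℝ), ∃ N : ℕ, ∀ n ≥ N,
    Ln n ∩ Metric.ball 0 R ⊆ L + Metric.ball 0 ε ∧
    L ∩ Metric.ball 0 R ⊆ Ln n + Metric.ball 0 ε


namespace Stmt5Aux

variable {d : ℕ} {Om : Set (Ed d)}

lemma conj_expF (l x : Ed d) :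
    (starRingEnd ℂ) (expF l x) = Complex.exp (-(2 * Real.pi * Complex.I * Complex.ofReal (inner ℝ l x : ℝ))) := by
  rw [expF, ← Complex.exp_conj]
  congr 1
  simp only [map_mul, Complex.conj_ofReal, Complex.conj_I, map_ofNat]
  ring

lemma prod_expF (l m x : Ed d) :
    expF l x * (starRingEnd ℂ) (expF m x)
      = Complex.exp (-(2 * Real.pi * Complex.I * Complex.ofReal (inner ℝ (m - l : Ed d) x : ℝ))) := by
  rw [conj_expF, expF, ← Complex.exp_add, inner_sub_left]
  congr 1
  push_cast
  ring

lemma integral_prod_expF (Om : Set (Ed d)) (l m : Ed d) :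
    ∫ x in Om, expF l x * (starRingEnd ℂ) (expF m x) = ftInd Om (m - l) := by
  simp_rw [prod_expF, ftInd]

lemma expF_continuous (l : Ed d) : Continuous (expF l) := by
  unfold expF
  exact Complex.continuous_exp.comp
    (continuous_const.mul (Complex.continuous_ofReal.comp
      (Continuous.inner continuous_const continuous_id)))

lemma norm_expF (l x : Ed d) : ‖expF l x‖ = 1 := by
  rw [expF, Complex.norm_exp]
  simp [mul_comm, Complex.mul_re]

lemma ftInd_continuous (hfin : volume Om ≠ ⊤) :
    Continuous (ftInd Om) := by
  haveI : Fact (volume Om < ⊤) := ⟨lt_top_iff_ne_top.mpr hfin⟩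
  apply continuous_of_dominated (bound := fun _ => (1 : ℝ))
  · intro xi
    exact ((Complex.continuous_exp.comp
      (continuous_neg.comp (continuous_const.mul (Complex.continuous_ofReal.comp
        (Continuous.inner continuous_const continuous_id))))).aestronglyMeasurable)
  · intro xi
    refine Filter.Eventually.of_forall fun x => ?_
    rw [Complex.norm_exp]
    simp [mul_comm, Complex.mul_re]
  · exact integrable_const 1
  · refine Filter.Eventually.of_forall fun x => ?_
    exact Complex.continuous_exp.comp (continuous_neg.comp (continuous_const.mul
      (Complex.continuous_ofReal.comp (Continuous.inner (by continuity) continuous_const))))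

lemma ftInd_zero (Om : Set (Ed d)) : ftInd Om 0 = ((volume Om).toReal : ℂ) := by
  simp [ftInd, measureReal_def]

lemma expF_memL2 (hfin : volume Om ≠ ⊤) (l : Ed d) :
    MemLp (expF l) 2 (volume.restrict Om) := by
  haveI : Fact (volume Om < ⊤) := ⟨lt_top_iff_ne_top.mpr hfin⟩
  exact MemLp.of_bound (expF_continuous l).aestronglyMeasurable 1
    (Filter.Eventually.of_forall fun x => le_of_eq (norm_expF l x))

/-- The element of `L²(Ω)` given by `expF l`. -/
def V (hfin : volume Om ≠ ⊤) (l : Ed d) : Lp ℂ 2 (volume.restrict Om) :=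
  (expF_memL2 hfin l).toLp (expF l)

lemma inner_V (hfin : volume Om ≠ ⊤) (l m : Ed d) :
    (inner ℂ (V hfin l) (V hfin m) : ℂ) = (starRingEnd ℂ) (ftInd Om (m - l)) := by
  rw [L2.inner_def]
  have h1 := (expF_memL2 hfin l).coeFn_toLp
  have h2 := (expF_memL2 hfin m).coeFn_toLp
  have : (fun a => (inner ℂ ((V hfin l : Lp ℂ 2 (volume.restrict Om)) a) ((V hfin m) a) : ℂ))
      =ᵐ[volume.restrict Om] fun a => (starRingEnd ℂ) (expF l a) * expF m a := by
    filter_upwards [h1, h2] with a ha hb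
    rw [show ((V hfin l : Lp ℂ 2 (volume.restrict Om)) : Ed d → ℂ) a = expF l a from ha,
      show ((V hfin m : Lp ℂ 2 (volume.restrict Om)) : Ed d → ℂ) a = expF m a from hb,
      RCLike.inner_apply']
  rw [integral_congr_ae this]
  have : ∀ a, (starRingEnd ℂ) (expF l a) * expF m a
      = (starRingEnd ℂ) (expF l a * (starRingEnd ℂ) (expF m a)) := by
    intro a; simp [mul_comm]
  simp_rw [this]
  rw [integral_conj, integral_prod_expF]

lemma norm_V_sq (hfin : volume Om ≠ ⊤) (x : Ed d) :
    ‖V hfin x‖ ^ 2 = (volume Om).toReal := by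
  have h := @inner_self_eq_norm_sq ℂ _ _ _ _ (V hfin x)
  rw [← h, inner_V hfin x x, sub_self, ftInd_zero]
  simp

theorem forward (hfin : volume Om ≠ ⊤)
    (hpos : 0 < volume Om) (L : Set (Ed d)) (hOrth : IsOrthSys Om L) :
    IsPacking (fun x => ‖ftInd Om x‖ ^ 2 / (volume Om).toReal ^ 2) L := by
  classical
  set M : ℝ := (volume Om).toReal with hMdef
  have hM0 : 0 < M := ENNReal.toReal_pos hpos.ne' hfin
  set c : ℝ := (Real.sqrt M)⁻¹ with hc
  set w : L → Lp ℂ 2 (volume.restrict Om) := fun i => ((c : ℂ)) • V hfin (i : Ed d) with hw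
  have horth : Orthonormal ℂ w := by
    rw [orthonormal_iff_ite]
    intro i j
    have : (inner ℂ (w i) (w j) : ℂ) = (c : ℂ) * (c : ℂ) * (inner ℂ (V hfin i) (V hfin j) : ℂ) := by
      rw [hw]
      simp only [inner_smul_left, inner_smul_right, Complex.conj_ofReal]
      ring
    rw [this]
    by_cases hij : i = j
    · subst hij
      simp only [if_pos rfl]
      rw [inner_V hfin, sub_self, ftInd_zero]
      have : ((c : ℂ)) * (c : ℂ) = ((c * c : ℝ) : ℂ) := by push_cast; ring
      rw [this]
      have hcc : c * c = M⁻¹ := by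
        rw [hc, ← mul_inv, Real.mul_self_sqrt hM0.le]
      rw [hcc]
      have : ((starRingEnd ℂ) ((M : ℂ))) = (M : ℂ) := Complex.conj_ofReal M
      rw [this, ← Complex.ofReal_mul, inv_mul_cancel₀ hM0.ne']
      norm_num
    · simp only [if_neg hij]
      have hne : (i : Ed d) ≠ (j : Ed d) := fun h => hij (Subtype.coe_injective h)
      have h0 := hOrth i i.2 j j.2 hne
      rw [integral_prod_expF] at h0
      rw [inner_V hfin, h0]
      simp
  refine Filter.Eventually.of_forall fun x => ?_
  have key : ∀ s : Finset L, ∑ i ∈ s, ‖ftInd Om (x - (i : Ed d))‖ ^ 2 / M ^ 2 ≤ 1 := by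
    intro s
    have hb := horth.sum_inner_products_le (x := V hfin x) (s := s)
    have hterm : ∀ i : L, ‖(inner ℂ (w i) (V hfin x) : ℂ)‖ ^ 2
        = M⁻¹ * ‖ftInd Om (x - (i : Ed d))‖ ^ 2 := by
      intro i
      rw [hw]
      simp only [inner_smul_left, Complex.conj_ofReal]
      rw [inner_V hfin]
      rw [norm_mul, mul_pow]
      congr 1
      · rw [Complex.norm_real, Real.norm_eq_abs, _root_.sq_abs, hc, ← Real.sqrt_inv,
          Real.sq_sqrt (inv_nonneg.mpr hM0.le)]
      · exact congrArg (· ^ 2) (RCLike.norm_conj _)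
    rw [norm_V_sq hfin] at hb
    simp_rw [hterm] at hb
    rw [← Finset.mul_sum] at hb
    have := (inv_mul_le_iff₀ hM0).mp hb
    calc ∑ i ∈ s, ‖ftInd Om (x - (i : Ed d))‖ ^ 2 / M ^ 2
        = (∑ i ∈ s, ‖ftInd Om (x - (i : Ed d))‖ ^ 2) / M ^ 2 := by rw [Finset.sum_div]
      _ ≤ (M * M) / M ^ 2 := by
          apply div_le_div_of_nonneg_right ?_ (by positivity)
          exact this
      _ = 1 := by field_simp [sq]
  calc ∑' (l : L), ENNReal.ofReal
        ((fun y => ‖ftInd Om y‖ ^ 2 / (volume Om).toReal ^ 2) (x - (l : Ed d)))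
      = ⨆ s : Finset L, ∑ i ∈ s, ENNReal.ofReal (‖ftInd Om (x - (i : Ed d))‖ ^ 2 / M ^ 2) :=
        ENNReal.tsum_eq_iSup_sum
    _ ≤ 1 := by
        refine iSup_le fun s => ?_
        rw [← ENNReal.ofReal_sum_of_nonneg (fun i _ => by positivity)]
        calc ENNReal.ofReal (∑ i ∈ s, ‖ftInd Om (x - (i : Ed d))‖ ^ 2 / M ^ 2)
            ≤ ENNReal.ofReal 1 := ENNReal.ofReal_le_ofReal (key s)
          _ = 1 := ENNReal.ofReal_one

theorem backward (hfin : volume Om ≠ ⊤)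
    (hpos : 0 < volume Om) (L : Set (Ed d))
    (hP : IsPacking (fun x => ‖ftInd Om x‖ ^ 2 / (volume Om).toReal ^ 2) L) :
    IsOrthSys Om L := by
  classical
  set M : ℝ := (volume Om).toReal with hMdef
  have hM0 : 0 < M := ENNReal.toReal_pos hpos.ne' hfin
  set F : Ed d → ℝ := fun y => ‖ftInd Om y‖ ^ 2 / M ^ 2 with hF
  have hFcont : Continuous F := by
    apply Continuous.div_const
    exact ((ftInd_continuous hfin).norm).pow 2
  have hF0 : F 0 = 1 := by
    rw [hF]
    simp only [ftInd_zero]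
    rw [Complex.norm_real, Real.norm_eq_abs, _root_.sq_abs, ← hMdef]
    field_simp
  have hFnonneg : ∀ y, 0 ≤ F y := fun y => by positivity
  intro l hl m hm hlm
  rw [integral_prod_expF]
  set S : Set (Ed d) := {x | ∑' (lam : L), ENNReal.ofReal (F (x - (lam : Ed d))) ≤ 1} with hS
  have hSfull : volume Sᶜ = 0 := by
    have hP' : ∀ᵐ x : Ed d, x ∈ S := hP
    rw [ae_iff] at hP'
    exact hP'
  have hSbound : ∀ x ∈ S, F (x - l) + F (x - m) ≤ 1 := by
    intro x hx
    set i : L := ⟨l, hl⟩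
    set j : L := ⟨m, hm⟩
    have hij : i ≠ j := fun h => hlm (congrArg Subtype.val h)
    have h1 : ∑ k ∈ ({i, j} : Finset L), ENNReal.ofReal (F (x - (k : Ed d)))
        ≤ ∑' (lam : L), ENNReal.ofReal (F (x - (lam : Ed d))) :=
      Summable.sum_le_tsum _ (fun _ _ => zero_le) ENNReal.summable
    rw [Finset.sum_pair hij] at h1
    have h2 : ENNReal.ofReal (F (x - l) + F (x - m)) ≤ 1 := by
      rw [ENNReal.ofReal_add (hFnonneg _) (hFnonneg _)]
      exact le_trans h1 hx
    exact ENNReal.ofReal_le_one.mp h2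
  have hNe : Filter.NeBot (nhds m ⊓ Filter.principal S) := by
    rw [Filter.inf_principal_neBot_iff]
    intro U hU
    obtain ⟨δ, hδ, hball⟩ := Metric.mem_nhds_iff.mp hU
    by_contra hemp
    rw [Set.not_nonempty_iff_eq_empty] at hemp
    have hsub : Metric.ball m δ ⊆ Sᶜ := by
      intro y hy hyS
      exact Set.eq_empty_iff_forall_notMem.mp hemp y ⟨hball hy, hyS⟩
    have := measure_mono (μ := (volume : Measure (Ed d))) hsub
    rw [hSfull] at this
    exact absurd (le_antisymm this zero_le)
      (Metric.measure_ball_pos volume m hδ).ne'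
  have htend : Filter.Tendsto (fun x => F (x - l) + F (x - m))
      (nhds m ⊓ Filter.principal S) (nhds (F (m - l) + 1)) := by
    have hc : Continuous (fun x : Ed d => F (x - l) + F (x - m)) :=
      (hFcont.comp (continuous_id.sub continuous_const)).add
        (hFcont.comp (continuous_id.sub continuous_const))
    have := hc.tendsto m
    rw [show F (m - l) + 1 = F (m - l) + F (m - m) by rw [sub_self, hF0]]
    exact this.mono_left inf_le_left
  have hev : ∀ᶠ x in (nhds m ⊓ Filter.principal S), F (x - l) + F (x - m) ≤ 1 := by
    rw [Filter.eventually_inf_principal]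
    exact Filter.Eventually.of_forall fun x hx => hSbound x hx
  have hle : F (m - l) + 1 ≤ 1 := le_of_tendsto htend hev
  have hFml : F (m - l) = 0 :=
    le_antisymm (by linarith) (hFnonneg _)
  rw [hF] at hFml
  have hM2 : (M:ℝ) ^ 2 ≠ 0 := by positivity
  field_simp at hFml
  simpa using hFml

end Stmt5Aux

theorem stmt5 {d : ℕ} (Om : Set (Ed d)) (hB : Bornology.IsBounded Om)
    (hM : MeasurableSet Om) (hpos : 0 < volume Om) (L : Set (Ed d)) :
    IsOrthSys Om L ↔
      IsPacking (fun x => ‖ftInd Om x‖ ^ 2 / (volume Om).toReal ^ 2) L := by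
  have hfin : volume Om ≠ ⊤ := hB.measure_lt_top.ne
  exact ⟨Stmt5Aux.forward hfin hpos L, Stmt5Aux.backward hfin hpos L⟩
end
end

section
/- Let Ω ⊂ ℝ^d be bounded and measurable, and suppose Ω + Λ_n is a tiling for every n, where the Λ_n are uniformly discrete with separation constants bounded below by δ > 0. If Λ_n converges weakly to Λ, then Ω + Λ is also a tiling. -/
open MeasureTheory Complex Set
open scoped Pointwise ENNReal RealInnerProductSpace

noncomputable section

namespace Stmt9Aux
open MeasureTheory Set Metric Filter
open scoped symmDiff

variable {d : ℕ}

/-- The translate `Ω + v` as a preimage. -/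
def T (Om : Set (Ed d)) (v : Ed d) : Set (Ed d) := (fun x => x - v) ⁻¹' Om

lemma T_meas {Om : Set (Ed d)} (hM : MeasurableSet Om) (v : Ed d) : MeasurableSet (T Om v) :=
  (measurable_id.sub_const v) hM

lemma vol_T {Om : Set (Ed d)} (hM : MeasurableSet Om) (v : Ed d) : volume (T Om v) = volume Om :=
  (measurePreserving_sub_right volume v).measure_preimage hM.nullMeasurableSet

lemma tendsto_symm {Om : Set (Ed d)} (hM : MeasurableSet Om) (hB : Bornology.IsBounded Om) :
    Tendsto (fun v : Ed d => volume (T Om v ∆ Om)) (nhds 0) (nhds 0) := by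
  have hfin : volume Om ≠ ⊤ := hB.measure_lt_top.ne
  have hc : Continuous fun v : Ed d =>
      (⟨fun x => x - v, by fun_prop⟩ : C(Ed d, Ed d)) := by
    apply ContinuousMap.continuous_of_continuous_uncurry
    exact continuous_snd.sub continuous_fst
  have h0 : (⟨fun x => x - (0 : Ed d), by fun_prop⟩ : C(Ed d, Ed d)) = ContinuousMap.id _ := by
    ext x; simp
  have := tendsto_measure_symmDiff_preimage_nhds_zero (μ := volume) (ν := volume)
    (f := fun v => (⟨fun x => x - v, by fun_prop⟩ : C(_,_))) (g := ContinuousMap.id _)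
    (s := Om) (l := nhds 0) (by rw [← h0]; exact hc.tendsto 0)
    (Eventually.of_forall fun v => measurePreserving_sub_right volume v)
    (MeasurePreserving.id _) hM.nullMeasurableSet hfin
  simpa [T] using this

lemma symm_small {Om : Set (Ed d)} (hM : MeasurableSet Om) (hB : Bornology.IsBounded Om)
    {η : ℝ≥0∞} (hη : η ≠ 0) :
    ∃ ε > (0:ℝ), ∀ a b : Ed d, dist a b < ε → volume (T Om a ∆ T Om b) ≤ η := by
  have h := (tendsto_symm hM hB).eventually_lt_const (by simpa [pos_iff_ne_zero] using hη)
  rw [Metric.eventually_nhds_iff] at h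
  obtain ⟨ε, hε, hball⟩ := h
  refine ⟨ε, hε, fun a b hab => ?_⟩
  have hkey : T Om a ∆ T Om b = (fun x => x - b) ⁻¹' (T Om (a - b) ∆ Om) := by
    rw [Set.preimage_symmDiff]
    congr 1
    ext x
    have : x - b - (a - b) = x - a := by abel
    simp only [T, mem_preimage, this]
  rw [hkey, (measurePreserving_sub_right volume b).measure_preimage
    (((T_meas hM _).symmDiff hM).nullMeasurableSet)]
  have : dist (a - b) (0 : Ed d) < ε := by
    rw [dist_zero_right, ← dist_eq_norm]
    exact hab
  exact (hball this).le

/-- a δ-separated bounded set is finite -/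
lemma sep_finite {S : Set (Ed d)} {δ : ℝ} (hδ : 0 < δ) (hud : UnifDiscrete S δ)
    (hb : Bornology.IsBounded S) : S.Finite := by
  obtain ⟨R, hR⟩ := hb.subset_closedBall 0
  have htb : TotallyBounded (closedBall (0 : Ed d) R) :=
    (isCompact_closedBall _ _).totallyBounded
  obtain ⟨t, htf, ht⟩ := (totallyBounded_iff.1 htb) (δ/2) (by linarith)
  have hex : ∀ l : Ed d, ∃ y, l ∈ S → y ∈ t ∧ l ∈ ball y (δ/2) := by
    intro l
    by_cases hl : l ∈ S
    · obtain ⟨y, hy, hly⟩ := mem_iUnion₂.1 (ht (hR hl))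
      exact ⟨y, fun _ => ⟨hy, hly⟩⟩
    · exact ⟨0, fun h => absurd h hl⟩
  choose f hf using hex
  have hinj : Set.InjOn f S := by
    intro a ha b hb hab
    by_contra hne
    have h1 := (hf a ha).2
    have h2 := (hf b hb).2
    rw [hab] at h1
    have : dist a b < δ := by
      calc dist a b ≤ dist a (f b) + dist (f b) b := dist_triangle _ _ _
      _ < δ/2 + δ/2 := by
          rw [dist_comm (f b) b]
          exact add_lt_add (mem_ball.1 h1) (mem_ball.1 h2)
      _ = δ := by ring
    exact absurd (hud a ha b hb hne) (not_le.2 this)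
  have himg : (f '' S).Finite := htf.subset (by rintro _ ⟨l, hl, rfl⟩; exact (hf l hl).1)
  exact himg.of_finite_image hinj

lemma ud_countable {S : Set (Ed d)} {δ : ℝ} (hδ : 0 < δ) (hud : UnifDiscrete S δ) :
    S.Countable := by
  have hsub : S ⊆ ⋃ k : ℕ, S ∩ closedBall 0 k := by
    intro l hl
    obtain ⟨k, hk⟩ := exists_nat_ge ‖l‖
    exact mem_iUnion.2 ⟨k, hl, by simpa [mem_closedBall, dist_zero_right] using hk⟩
  refine Set.Countable.mono hsub (countable_iUnion fun k => ?_)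
  exact (sep_finite hδ (fun a ha b hb hne => hud a ha.1 b hb.1 hne)
    (isBounded_closedBall.subset inter_subset_right)).countable

/-- from a tiling, a.e. point is covered -/
lemma cover_of_tiling {Om M : Set (Ed d)}
    (h : IsTiling (Set.indicator Om (fun _ => (1 : ℝ))) M) :
    ∀ᵐ x : Ed d, ∃ l ∈ M, x ∈ T Om l := by
  filter_upwards [h] with x hx
  by_contra hc
  push_neg at hc
  have : ∀ l : M, ENNReal.ofReal (Set.indicator Om (fun _ => (1:ℝ)) (x - (l : Ed d))) = 0 := by
    rintro ⟨l, hl⟩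
    have : x - l ∉ Om := hc l hl
    simp [Set.indicator_of_notMem this]
  rw [tsum_congr this] at hx
  simp at hx

/-- from a tiling, translates are pairwise a.e. disjoint -/
lemma pack_of_tiling {Om M : Set (Ed d)}
    (h : IsTiling (Set.indicator Om (fun _ => (1 : ℝ))) M)
    {a b : Ed d} (ha : a ∈ M) (hb : b ∈ M) (hab : a ≠ b) :
    volume (T Om a ∩ T Om b) = 0 := by
  have hnull : volume {x : Ed d | ¬ ∑' l : M, ENNReal.ofReal
      (Set.indicator Om (fun _ => (1:ℝ)) (x - (l : Ed d))) = 1} = 0 := by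
    have := h
    rwa [IsTiling, ae_iff] at this
  refine measure_mono_null ?_ hnull
  intro x hx
  simp only [mem_setOf_eq]
  intro heq
  have h2 : (2 : ℝ≥0∞) ≤ ∑' l : M, ENNReal.ofReal
      (Set.indicator Om (fun _ => (1:ℝ)) (x - (l : Ed d))) := by
    have hane : (⟨a, ha⟩ : M) ≠ ⟨b, hb⟩ := by simp [hab]
    classical
    have hsum := ENNReal.sum_le_tsum (f := fun l : M => ENNReal.ofReal
      (Set.indicator Om (fun _ => (1:ℝ)) (x - (l : Ed d))))
      ({(⟨a, ha⟩ : M), ⟨b, hb⟩} : Finset M)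
    rw [Finset.sum_pair hane] at hsum
    have hxa : x - a ∈ Om := hx.1
    have hxb : x - b ∈ Om := hx.2
    simpa [Set.indicator_of_mem hxa, Set.indicator_of_mem hxb, one_add_one_eq_two] using hsum
  rw [heq] at h2
  norm_num at h2

/-- if some set tiles by Om, then Om has positive measure -/
lemma vol_pos {Om M : Set (Ed d)} (hM : MeasurableSet Om) {δ : ℝ} (hδ : 0 < δ)
    (hud : UnifDiscrete M δ)
    (h : IsTiling (Set.indicator Om (fun _ => (1 : ℝ))) M) :
    volume Om ≠ 0 := by
  intro h0
  have hcnt : M.Countable := ud_countable hδ hud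
  have hbad : volume (⋃ l ∈ M, T Om l) = 0 := by
    refine (measure_biUnion_null_iff hcnt).2 fun l _ => ?_
    rw [vol_T hM]
    exact h0
  have h2 : ∀ᵐ x : Ed d, x ∉ ⋃ l ∈ M, T Om l := by
    rw [ae_iff]
    refine measure_mono_null ?_ hbad
    intro x hx
    simpa using hx
  have h3 : ∀ᵐ _x : Ed d, False := by
    filter_upwards [cover_of_tiling h, h2] with x hx hx2
    obtain ⟨l, hl, hxl⟩ := hx
    exact hx2 (mem_biUnion hl hxl)
  rw [ae_iff] at h3
  simp only [not_false_eq_true, setOf_true] at h3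
  exact (IsOpen.measure_ne_zero volume isOpen_univ univ_nonempty) h3

/-- the weak limit of δ-separated sets is δ-separated -/
lemma limit_ud {Ln : ℕ → Set (Ed d)} {L : Set (Ed d)} {δ : ℝ} (hδ : 0 < δ)
    (hud : ∀ n, UnifDiscrete (Ln n) δ) (hw : WeakLim Ln L) : UnifDiscrete L δ := by
  intro l hl m hm hne
  by_contra hlt
  push_neg at hlt
  set d0 := dist l m with hd0
  have hd0pos : 0 < d0 := dist_pos.2 hne
  set ε := min (d0/2) ((δ - d0)/2) with hε
  have hεpos : 0 < ε := lt_min (by linarith) (by linarith)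
  set R := ‖l‖ + ‖m‖ + 1 with hR
  have hRpos : 0 < R := by positivity
  obtain ⟨N, hN⟩ := hw ε hεpos R hRpos
  have hsub := (hN N le_rfl).2
  have hlmem : l ∈ L ∩ ball 0 R := ⟨hl, by simp only [mem_ball, dist_zero_right]; linarith [norm_nonneg m]⟩
  have hmmem : m ∈ L ∩ ball 0 R := ⟨hm, by simp only [mem_ball, dist_zero_right]; linarith [norm_nonneg l]⟩
  obtain ⟨a, ha, u, hu, hau⟩ := hsub hlmem
  obtain ⟨b, hb, v, hv, hbv⟩ := hsub hmmem
  have hla : dist l a < ε := by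
    rw [← hau, dist_comm]
    simpa [dist_eq_norm] using mem_ball_zero_iff.1 hu
  have hmb : dist m b < ε := by
    rw [← hbv, dist_comm]
    simpa [dist_eq_norm] using mem_ball_zero_iff.1 hv
  have habd : dist a b < d0 + 2 * ε := by
    calc dist a b ≤ dist a l + dist l m + dist m b := dist_triangle4 a l m b
    _ < ε + d0 + ε := by rw [dist_comm a l]; linarith
    _ = d0 + 2 * ε := by ring
  have habpos : (0:ℝ) < dist a b := by
    have : d0 ≤ dist l a + dist a b + dist b m := dist_triangle4 l a b m
    have h1 : ε ≤ d0/2 := min_le_left _ _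
    rw [dist_comm b m] at this
    linarith
  have hne' : a ≠ b := dist_pos.1 habpos
  have := hud N a ha b hb hne'
  have h2 : ε ≤ (δ - d0)/2 := min_le_right _ _
  linarith

/-- translates along the weak limit are pairwise a.e. disjoint -/
lemma limit_pack {Om : Set (Ed d)} (hM : MeasurableSet Om) (hB : Bornology.IsBounded Om)
    {Ln : ℕ → Set (Ed d)} {L : Set (Ed d)}
    (ht : ∀ n, IsTiling (Set.indicator Om (fun _ => (1 : ℝ))) (Ln n))
    (hw : WeakLim Ln L) {l m : Ed d} (hl : l ∈ L) (hm : m ∈ L) (hne : l ≠ m) :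
    volume (T Om l ∩ T Om m) = 0 := by
  have hkey : ∀ η : ℝ≥0∞, η ≠ 0 → volume (T Om l ∩ T Om m) ≤ 2 * η := by
    intro η hη
    obtain ⟨ε0, hε0, hsym⟩ := symm_small hM hB hη
    set d0 := dist l m with hd0
    have hd0pos : 0 < d0 := dist_pos.2 hne
    set ε := min ε0 (d0/2) with hεdef
    have hεpos : 0 < ε := lt_min hε0 (by linarith)
    set R := ‖l‖ + ‖m‖ + 1 with hR
    have hRpos : 0 < R := by positivity
    obtain ⟨N, hN⟩ := hw ε hεpos R hRpos
    have hsub := (hN N le_rfl).2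
    have hlmem : l ∈ L ∩ ball 0 R :=
      ⟨hl, by simp only [mem_ball, dist_zero_right]; linarith [norm_nonneg m]⟩
    have hmmem : m ∈ L ∩ ball 0 R :=
      ⟨hm, by simp only [mem_ball, dist_zero_right]; linarith [norm_nonneg l]⟩
    obtain ⟨a, ha, u, hu, hau⟩ := hsub hlmem
    obtain ⟨b, hb, v, hv, hbv⟩ := hsub hmmem
    have hla : dist l a < ε := by
      rw [← hau, dist_comm]
      simpa [dist_eq_norm] using mem_ball_zero_iff.1 hu
    have hmb : dist m b < ε := by
      rw [← hbv, dist_comm]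
      simpa [dist_eq_norm] using mem_ball_zero_iff.1 hv
    have habpos : (0:ℝ) < dist a b := by
      have h4 : d0 ≤ dist l a + dist a b + dist b m := dist_triangle4 l a b m
      have h1 : ε ≤ d0/2 := min_le_right _ _
      rw [dist_comm b m] at h4
      linarith
    have hne' : a ≠ b := dist_pos.1 habpos
    have hpack : volume (T Om a ∩ T Om b) = 0 := pack_of_tiling (ht N) ha hb hne'
    have hincl : T Om l ∩ T Om m ⊆
        (T Om a ∩ T Om b) ∪ ((T Om l ∆ T Om a) ∪ (T Om m ∆ T Om b)) := by
      intro x ⟨hxl, hxm⟩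
      by_cases hxa : x ∈ T Om a
      · by_cases hxb : x ∈ T Om b
        · exact Or.inl ⟨hxa, hxb⟩
        · exact Or.inr (Or.inr (Or.inl ⟨hxm, hxb⟩))
      · exact Or.inr (Or.inl (Or.inl ⟨hxl, hxa⟩))
    calc volume (T Om l ∩ T Om m)
        ≤ volume (T Om a ∩ T Om b) + (volume (T Om l ∆ T Om a) + volume (T Om m ∆ T Om b)) := by
          refine (measure_mono hincl).trans ?_
          refine (measure_union_le _ _).trans ?_
          gcongr
          exact measure_union_le _ _
      _ ≤ 0 + (η + η) := by
          gcongr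
          · exact hpack.le
          · exact hsym l a (lt_of_lt_of_le hla (min_le_left _ _))
          · exact hsym m b (lt_of_lt_of_le hmb (min_le_left _ _))
      _ = 2 * η := by ring
  by_contra hpos
  have hfin : volume (T Om l ∩ T Om m) ≠ ⊤ := by
    refine ne_top_of_le_ne_top ?_ (measure_mono (inter_subset_left (t := T Om m)))
    rw [vol_T hM]
    exact hB.measure_lt_top.ne
  have hle : volume (T Om l ∩ T Om m) ≤ 0 := by
    refine ENNReal.le_of_forall_pos_le_add fun ξ hξ _ => ?_
    have := hkey (ξ/2 : ℝ≥0∞) (by simp [ENNReal.div_eq_zero_iff, hξ.ne'])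
    rw [ENNReal.mul_div_cancel two_ne_zero ENNReal.ofNat_ne_top] at this
    exact this.trans (le_add_self)
  exact hpos (le_antisymm hle (zero_le))

/-- the part of a ball not covered by the limit translates is null -/
lemma uncovered_null {Om : Set (Ed d)} (hM : MeasurableSet Om) (hB : Bornology.IsBounded Om)
    {Ln : ℕ → Set (Ed d)} {L : Set (Ed d)} {δ : ℝ} (hδ : 0 < δ)
    (hud : ∀ n, UnifDiscrete (Ln n) δ)
    (ht : ∀ n, IsTiling (Set.indicator Om (fun _ => (1 : ℝ))) (Ln n))
    (hw : WeakLim Ln L) (hvol : volume Om ≠ 0) {r : ℝ} (hr : 0 < r) :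
    volume (ball (0 : Ed d) r \ ⋃ l ∈ L, T Om l) = 0 := by
  classical
  obtain ⟨R0, hR0pos, hOm⟩ := hB.subset_ball_lt 0 0
  set R := r + R0 with hRdef
  set A := ball (0 : Ed d) r \ ⋃ l ∈ L, T Om l with hAdef
  set V := volume (ball (0 : Ed d) (R + R0)) with hVdef
  have hV : V ≠ ⊤ := measure_ball_lt_top.ne
  have hVpos : V ≠ 0 := (measure_ball_pos _ _ (by linarith)).ne'
  have key : ∀ η : ℝ≥0∞, η ≠ 0 → volume A * volume Om ≤ V * η := by
    intro η hη
    obtain ⟨ε, hε, hsym⟩ := symm_small hM hB hη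
    obtain ⟨N, hN⟩ := hw ε hε R (by linarith)
    have hface := (hN N le_rfl).1
    set S := Ln N ∩ ball 0 R with hSdef
    have hSfin : S.Finite := sep_finite hδ
      (fun a ha b hb hne => hud N a ha.1 b hb.1 hne)
      (isBounded_ball.subset inter_subset_right)
    have happrox : ∀ v : Ed d, ∃ w, v ∈ S → w ∈ L ∧ dist v w < ε := by
      intro v
      by_cases hv : v ∈ S
      · obtain ⟨a, ha, u, hu, hau⟩ := hface hv
        refine ⟨a, fun _ => ⟨ha, ?_⟩⟩
        rw [← hau, dist_comm]
        simpa [dist_eq_norm] using mem_ball_zero_iff.1 hu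
      · exact ⟨0, fun h => absurd h hv⟩
    choose f hf using happrox
    have hG : volume {x : Ed d | ¬ ∃ l ∈ Ln N, x ∈ T Om l} = 0 := by
      have := cover_of_tiling (ht N)
      rwa [ae_iff] at this
    have hincl : A ∩ {x | ∃ l ∈ Ln N, x ∈ T Om l} ⊆
        ⋃ l ∈ hSfin.toFinset, (T Om l \ T Om (f l)) := by
      rintro x ⟨hxA, l, hlN, hxT⟩
      have hxr : ‖x‖ < r := by simpa [mem_ball_zero_iff] using hxA.1
      have hxl : ‖x - l‖ < R0 := mem_ball_zero_iff.1 (hOm hxT)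
      have hlnorm : ‖l‖ ≤ ‖x‖ + ‖x - l‖ := by
        have h := norm_sub_le x (x - l)
        have h2 : x - (x - l) = l := by abel
        rwa [h2] at h
      have hlS : l ∈ S := ⟨hlN, mem_ball_zero_iff.2 (by rw [hRdef]; linarith)⟩
      refine mem_biUnion (hSfin.mem_toFinset.2 hlS) ⟨hxT, fun hxf => ?_⟩
      exact hxA.2 (mem_biUnion (hf l hlS).1 hxf)
    have h1 : volume A ≤ volume (A ∩ {x | ∃ l ∈ Ln N, x ∈ T Om l}) +
        volume {x : Ed d | ¬ ∃ l ∈ Ln N, x ∈ T Om l} := by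
      refine (measure_mono ?_).trans (measure_union_le _ _)
      intro x hx
      by_cases h : ∃ l ∈ Ln N, x ∈ T Om l
      exacts [Or.inl ⟨hx, h⟩, Or.inr h]
    rw [hG, add_zero] at h1
    have h2 : volume A ≤ ∑ l ∈ hSfin.toFinset, volume (T Om l \ T Om (f l)) :=
      h1.trans ((measure_mono hincl).trans (measure_biUnion_finset_le _ _))
    have h4 : volume A ≤ (hSfin.toFinset.card : ℝ≥0∞) * η := by
      refine h2.trans ?_
      have := Finset.sum_le_card_nsmul hSfin.toFinset
        (fun l => volume (T Om l \ T Om (f l))) η ?_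
      · simpa [nsmul_eq_mul] using this
      · intro l hl
        have hlS := hSfin.mem_toFinset.1 hl
        refine (measure_mono fun x hx => ?_).trans (hsym l (f l) (hf l hlS).2)
        exact Set.mem_symmDiff.2 (Or.inl ⟨hx.1, hx.2⟩)
    have hdisj : (hSfin.toFinset : Set (Ed d)).Pairwise (Function.onFun (AEDisjoint volume) (T Om)) := by
      intro a ha b hb hne
      exact pack_of_tiling (ht N) (hSfin.mem_toFinset.1 ha).1 (hSfin.mem_toFinset.1 hb).1 hne
    have h5 : ∑ l ∈ hSfin.toFinset, volume (T Om l) =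
        volume (⋃ l ∈ hSfin.toFinset, T Om l) :=
      (measure_biUnion_finset₀ hdisj fun l _ => (T_meas hM l).nullMeasurableSet).symm
    have h6 : volume (⋃ l ∈ hSfin.toFinset, T Om l) ≤ V := by
      refine measure_mono ?_
      intro x hx
      obtain ⟨l, hl, hxT⟩ := mem_iUnion₂.1 hx
      have hlS := hSfin.mem_toFinset.1 hl
      have hxl : ‖x - l‖ < R0 := mem_ball_zero_iff.1 (hOm hxT)
      have hlR : ‖l‖ < R := mem_ball_zero_iff.1 hlS.2
      have hxe : ‖x‖ ≤ ‖x - l‖ + ‖l‖ := by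
        have h := norm_add_le (x - l) l
        rwa [sub_add_cancel] at h
      exact mem_ball_zero_iff.2 (by linarith)
    have h7 : (hSfin.toFinset.card : ℝ≥0∞) * volume Om ≤ V := by
      have heq : ∑ l ∈ hSfin.toFinset, volume (T Om l) =
          (hSfin.toFinset.card : ℝ≥0∞) * volume Om := by
        rw [Finset.sum_congr rfl fun l _ => vol_T hM l, Finset.sum_const, nsmul_eq_mul]
      rw [← heq]
      rw [h5]
      exact h6
    calc volume A * volume Om ≤ ((hSfin.toFinset.card : ℝ≥0∞) * η) * volume Om := by gcongr
      _ = ((hSfin.toFinset.card : ℝ≥0∞) * volume Om) * η := by ring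
      _ ≤ V * η := by gcongr
  have hzero : volume A * volume Om ≤ 0 := by
    refine ENNReal.le_of_forall_pos_le_add fun ξ hξ _ => ?_
    have hηne : (ξ : ℝ≥0∞) / V ≠ 0 := by
      simp [ENNReal.div_eq_zero_iff, hξ.ne', hV]
    have := key _ hηne
    rw [ENNReal.mul_div_cancel hVpos hV] at this
    rwa [zero_add]
  have := le_antisymm hzero (zero_le)
  rcases mul_eq_zero.1 this with h | h
  · exact h
  · exact absurd h hvol

end Stmt9Aux


theorem stmt9 {d : ℕ} (Om : Set (Ed d)) (hB : Bornology.IsBounded Om)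
    (hM : MeasurableSet Om)
    (Ln : ℕ → Set (Ed d)) (L : Set (Ed d)) (δ : ℝ) (hδ : 0 < δ)
    (hud : ∀ n, UnifDiscrete (Ln n) δ)
    (ht : ∀ n, IsTiling (Set.indicator Om (fun _ => (1 : ℝ))) (Ln n))
    (hw : WeakLim Ln L) :
    IsTiling (Set.indicator Om (fun _ => (1 : ℝ))) L := by
  classical
  open Stmt9Aux in
  have hL : UnifDiscrete L δ := Stmt9Aux.limit_ud hδ hud hw
  have hcnt : L.Countable := Stmt9Aux.ud_countable hδ hL
  have hvol : volume Om ≠ 0 := Stmt9Aux.vol_pos hM hδ (hud 0) (ht 0)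
  have h1 : ∀ᵐ x : Ed d, ∃ l ∈ L, x ∈ Stmt9Aux.T Om l := by
    rw [MeasureTheory.ae_iff]
    refine measure_mono_null
      (?_ : _ ⊆ ⋃ k : ℕ, (Metric.ball (0 : Ed d) (k + 1) \ ⋃ l ∈ L, Stmt9Aux.T Om l))
      (MeasureTheory.measure_iUnion_null fun k =>
        Stmt9Aux.uncovered_null hM hB hδ hud ht hw hvol (by positivity))
    intro x hx
    simp only [Set.mem_setOf_eq] at hx
    obtain ⟨k, hk⟩ := exists_nat_gt ‖x‖
    refine Set.mem_iUnion.2 ⟨k, ⟨mem_ball_zero_iff.2 (by push_cast; linarith), ?_⟩⟩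
    intro hmem
    obtain ⟨l, hl, hxl⟩ := Set.mem_iUnion₂.1 hmem
    exact hx ⟨l, hl, hxl⟩
  have h2 : ∀ᵐ x : Ed d, ∀ l ∈ L, ∀ m ∈ L, l ≠ m →
      ¬(x ∈ Stmt9Aux.T Om l ∩ Stmt9Aux.T Om m) := by
    rw [MeasureTheory.ae_iff]
    haveI := hcnt.to_subtype
    refine measure_mono_null (?_ : _ ⊆ ⋃ (l : L), ⋃ (m : L),
      if (l : Ed d) = (m : Ed d) then ∅ else Stmt9Aux.T Om l ∩ Stmt9Aux.T Om m) ?_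
    · intro x hx
      simp only [Set.mem_setOf_eq] at hx
      push_neg at hx
      obtain ⟨l, hl, m, hm, hne, hxm⟩ := hx
      refine Set.mem_iUnion.2 ⟨⟨l, hl⟩, Set.mem_iUnion.2 ⟨⟨m, hm⟩, ?_⟩⟩
      simp only [hne, if_false]
      exact hxm
    · refine MeasureTheory.measure_iUnion_null fun l =>
        MeasureTheory.measure_iUnion_null fun m => ?_
      by_cases hlm : (l : Ed d) = (m : Ed d)
      · simp [hlm]
      · simpa [hlm] using Stmt9Aux.limit_pack hM hB ht hw l.2 m.2 hlm
  filter_upwards [h1, h2] with x hx1 hx2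
  obtain ⟨l0, hl0, hxl0⟩ := hx1
  rw [tsum_eq_single (⟨l0, hl0⟩ : L) ?_]
  · have : x - l0 ∈ Om := hxl0
    simp [Set.indicator_of_mem this]
  · rintro ⟨m, hm⟩ hne
    by_cases hxm : x - m ∈ Om
    · exfalso
      have hne' : m ≠ l0 := by
        intro h
        exact hne (Subtype.ext h)
      exact hx2 m hm l0 hl0 hne' ⟨hxm, hxl0⟩
    · simp [Set.indicator_of_notMem hxm]
end
end

section
/- Let A, B be discrete sets in ℝ^d and τ ∈ ℝ^d, such that each of B, B + τ, B − τ is disjoint from A. Set Λ := A ∪ B, Λ' := A ∪ (B + τ), Λ'' := A ∪ (B − τ). Let f ≥ 0 be measurable on ℝ^d. If f + Λ is a tiling while f + Λ' and f + Λ'' are packings, then both f + Λ' and f + Λ'' are tilings. -/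
open MeasureTheory Complex Set
open scoped Pointwise ENNReal RealInnerProductSpace

noncomputable section

theorem stmt10 {d : ℕ} (A B : Set (Ed d)) (τ : Ed d)
    (h1 : Disjoint A B)
    (h2 : Disjoint A ((fun b => b + τ) '' B))
    (h3 : Disjoint A ((fun b => b - τ) '' B))
    (f : Ed d → ℝ) (hf : Measurable f) (hf0 : ∀ x, 0 ≤ f x)
    (ht : IsTiling f (A ∪ B))
    (hp1 : IsPacking f (A ∪ (fun b => b + τ) '' B))
    (hp2 : IsPacking f (A ∪ (fun b => b - τ) '' B)) :
    IsTiling f (A ∪ (fun b => b + τ) '' B) ∧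
    IsTiling f (A ∪ (fun b => b - τ) '' B) := by
  classical
  set SA : Ed d → ℝ≥0∞ := fun x => ∑' a : A, ENNReal.ofReal (f (x - a)) with hSA
  set SB : Ed d → ℝ≥0∞ := fun x => ∑' b : B, ENNReal.ofReal (f (x - b)) with hSB
  have hunion : ∀ (C D : Set (Ed d)), Disjoint C D → ∀ x : Ed d,
      ∑' l : ↥(C ∪ D), ENNReal.ofReal (f (x - l)) =
      (∑' a : C, ENNReal.ofReal (f (x - a))) + ∑' b : D, ENNReal.ofReal (f (x - b)) := by
    intro C D h x
    exact Summable.tsum_union_disjoint (f := fun l => ENNReal.ofReal (f (x - l))) h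
      ENNReal.summable ENNReal.summable
  have himg1 : ∀ x : Ed d,
      (∑' b : ↥((fun b => b + τ) '' B), ENNReal.ofReal (f (x - b))) = SB (x - τ) := by
    intro x
    rw [tsum_image (g := fun b => b + τ) (fun l => ENNReal.ofReal (f (x - l))) ((add_left_injective τ).injOn)]
    simp only [hSB]
    congr 1; ext b; congr 2; abel
  have himg2 : ∀ x : Ed d,
      (∑' b : ↥((fun b => b - τ) '' B), ENNReal.ofReal (f (x - b))) = SB (x + τ) := by
    intro x
    rw [tsum_image (g := fun b => b - τ) (fun l => ENNReal.ofReal (f (x - l))) ((sub_left_injective).injOn)]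
    simp only [hSB]
    congr 1; ext b; congr 2; abel
  have hE : ∀ᵐ x : Ed d, SA x + SB x = 1 := by
    filter_upwards [ht] with x hx
    rwa [hunion A B h1 x] at hx
  have hP1 : ∀ᵐ x : Ed d, SA x + SB (x - τ) ≤ 1 := by
    filter_upwards [hp1] with x hx
    rwa [hunion A _ h2 x, himg1 x] at hx
  have hP2 : ∀ᵐ x : Ed d, SA x + SB (x + τ) ≤ 1 := by
    filter_upwards [hp2] with x hx
    rwa [hunion A _ h3 x, himg2 x] at hx
  have hSAne : ∀ᵐ x : Ed d, SA x ≠ ∞ := by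
    filter_upwards [hE] with x hx
    exact ne_top_of_le_ne_top ENNReal.one_ne_top (le_self_add.trans hx.le)
  have hD1 : ∀ᵐ x : Ed d, SB (x - τ) ≤ SB x := by
    filter_upwards [hE, hP1, hSAne] with x h1' h2' h3'
    exact ENNReal.le_of_add_le_add_left h3' (h2'.trans_eq h1'.symm)
  have hD2 : ∀ᵐ x : Ed d, SB (x + τ) ≤ SB x := by
    filter_upwards [hE, hP2, hSAne] with x h1' h2' h3'
    exact ENNReal.le_of_add_le_add_left h3' (h2'.trans_eq h1'.symm)
  have shift : ∀ (v : Ed d) (p : Ed d → Prop), (∀ᵐ x : Ed d, p x) → ∀ᵐ x : Ed d, p (x + v) := by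
    intro v p hp
    exact ((measurePreserving_add_right
      (volume : Measure (Ed d)) v).quasiMeasurePreserving.tendsto_ae).eventually hp
  have hD3 : ∀ᵐ x : Ed d, SB x ≤ SB (x + τ) := by
    have := shift τ (fun y => SB (y - τ) ≤ SB y) hD1
    filter_upwards [this] with x hx
    simpa using hx
  have hD4 : ∀ᵐ x : Ed d, SB x ≤ SB (x - τ) := by
    have := shift (-τ) (fun y => SB (y + τ) ≤ SB y) hD2
    filter_upwards [this] with x hx
    simpa [sub_eq_add_neg] using hx
  constructor
  · filter_upwards [hE, hD1, hD4] with x h1' h2' h3'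
    rw [hunion A _ h2 x, himg1 x, le_antisymm h2' h3']
    exact h1'
  · filter_upwards [hE, hD2, hD3] with x h1' h2' h3'
    rw [hunion A _ h3 x, himg2 x, le_antisymm h2' h3']
    exact h1'
end
end

section
/- Let A, B be discrete sets in ℝ^d and τ ∈ ℝ^d, with each of B, B + τ, B − τ disjoint from A. Let Ω ⊂ ℝ^d be bounded measurable of positive measure. If Λ = A ∪ B is a spectrum for Ω, and the exponential systems E(A ∪ (B+τ)) and E(A ∪ (B−τ)) are both orthogonal in L²(Ω), then each of A ∪ (B+τ) and A ∪ (B−τ) is a spectrum for Ω. -/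
open MeasureTheory Complex Set
open scoped Pointwise ENNReal RealInnerProductSpace

noncomputable section

lemma expF_add {d : ℕ} (l m x : Ed d) : expF (l + m) x = expF l x * expF m x := by
  unfold expF
  rw [← Complex.exp_add]
  congr 1
  rw [inner_add_left]
  push_cast
  ring

lemma expF_norm {d : ℕ} (l x : Ed d) : ‖expF l x‖ = 1 := by
  unfold expF
  rw [Complex.norm_exp]
  simp [Complex.mul_re]

lemma expF_cont {d : ℕ} (l : Ed d) : Continuous (expF l) := by
  unfold expF
  exact Complex.continuous_exp.comp (continuous_const.mul (Complex.continuous_ofReal.comp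
    (continuous_const.inner continuous_id)))

variable {d : ℕ} {Om : Set (Ed d)}

lemma finmeas (hB : Bornology.IsBounded Om) :
    IsFiniteMeasure (volume.restrict (Om : Set (Ed d))) := by
  refine ⟨?_⟩
  rw [Measure.restrict_apply_univ]
  exact hB.measure_lt_top

lemma memL2_expF (hB : Bornology.IsBounded Om) (l : Ed d) :
    MemLp (expF l) 2 (volume.restrict Om) := by
  haveI := finmeas hB
  refine MemLp.of_bound ((expF_cont l).aestronglyMeasurable) 1 ?_
  · filter_upwards with x using le_of_eq (expF_norm l x)

lemma inner_toLp {p q : Ed d → ℂ} (hp : MemLp p 2 (volume.restrict Om))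
    (hq : MemLp q 2 (volume.restrict Om)) :
    (inner ℂ (hp.toLp p) (hq.toLp q) : ℂ) = ∫ x in Om, (starRingEnd ℂ) (p x) * q x := by
  rw [MeasureTheory.L2.inner_def]
  refine integral_congr_ae ?_
  filter_upwards [hp.coeFn_toLp, hq.coeFn_toLp] with x h1 h2
  rw [h1, h2, RCLike.inner_apply']

lemma inner_Lp (F G : Lp ℂ 2 (volume.restrict Om)) :
    (inner ℂ F G : ℂ) = ∫ x in Om, (starRingEnd ℂ) (F x) * G x := by
  rw [MeasureTheory.L2.inner_def]
  refine integral_congr_ae (Filter.Eventually.of_forall fun x => ?_)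
  simp [RCLike.inner_apply', mul_comm]

lemma closure_orth {H : Type*} [NormedAddCommGroup H] [InnerProductSpace ℂ H]
    (g : H) (T : Set H) (h : ∀ t ∈ T, (inner ℂ g t : ℂ) = 0) {v : H}
    (hv : v ∈ (Submodule.span ℂ T).topologicalClosure) : (inner ℂ g v : ℂ) = 0 := by
  have hle : (Submodule.span ℂ T).topologicalClosure ≤ LinearMap.ker (innerSL ℂ g : H →ₗ[ℂ] ℂ) :=
    Submodule.topologicalClosure_minimal _
      (Submodule.span_le.2 fun t ht => by
        show t ∈ LinearMap.ker (innerSL ℂ g : H →ₗ[ℂ] ℂ)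
        rw [LinearMap.mem_ker]; exact (innerSL_apply_apply (𝕜 := ℂ) g t).trans (h t ht))
      (ContinuousLinearMap.isClosed_ker (innerSL ℂ g))
  simpa [LinearMap.mem_ker] using hle hv

lemma conj_int {p q : Ed d → ℂ} :
    ∫ x in Om, (starRingEnd ℂ) (p x) * q x
      = (starRingEnd ℂ) (∫ x in Om, p x * (starRingEnd ℂ) (q x)) := by
  rw [← integral_conj]
  refine integral_congr_ae (Filter.Eventually.of_forall fun x => ?_)
  simp

lemma mem_closure_of_orth (hB : Bornology.IsBounded Om) (hM : MeasurableSet Om)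
    (A B : Set (Ed d)) (hspec : IsSpectrum Om (A ∪ B)) (h1 : Disjoint A B)
    (v : Ed d)
    (hvA : ∀ a ∈ A, ∫ x in Om, expF a x * (starRingEnd ℂ) (expF v x) = 0) :
    (memL2_expF hB v).toLp (expF v) ∈
      (Submodule.span ℂ
        ((fun b : Ed d => (memL2_expF hB b).toLp (expF b)) '' B)).topologicalClosure := by
  set μ := volume.restrict Om with hμ
  set Eb : Ed d → Lp ℂ 2 μ := fun l => (memL2_expF hB l).toLp (expF l) with hEb
  set K := (Submodule.span ℂ (Eb '' B)).topologicalClosure with hK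
  haveI : CompleteSpace K := (Submodule.isClosed_topologicalClosure _).completeSpace_coe
  set V : Lp ℂ 2 μ := Eb v with hV
  set w : Lp ℂ 2 μ := V - (Submodule.orthogonalProjectionOnto K V : Lp ℂ 2 μ) with hw
  have hworth : w ∈ Kᗮ := Submodule.sub_starProjection_mem_orthogonal (K := K) V
  -- inner products of basis elements of A with elements of E(B) vanish
  have hAB : ∀ a ∈ A, ∀ t ∈ Eb '' B, (inner ℂ (Eb a) t : ℂ) = 0 := by
    rintro a ha t ⟨b, hb, rfl⟩
    rw [hEb]
    rw [inner_toLp, conj_int, hspec.1 a (Or.inl ha) b (Or.inr hb) (h1.ne_of_mem ha hb), map_zero]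
  -- every basis exponential is orthogonal to w
  have hall : ∀ l ∈ A ∪ B, (inner ℂ (Eb l) w : ℂ) = 0 := by
    rintro l (ha | hb)
    · rw [hw, inner_sub_right]
      have e1 : (inner ℂ (Eb l) V : ℂ) = 0 := by
        rw [hV, hEb, inner_toLp, conj_int, hvA l ha, map_zero]
      have e2 : (inner ℂ (Eb l) ((Submodule.orthogonalProjectionOnto K V : Lp ℂ 2 μ)) : ℂ) = 0 :=
        closure_orth (Eb l) (Eb '' B) (hAB l ha) (SetLike.coe_mem (Submodule.orthogonalProjectionOnto K V))
      rw [e1, e2, sub_zero]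
    · exact ((Submodule.mem_orthogonal K w).1 hworth) (Eb l)
        (Submodule.le_topologicalClosure _ (Submodule.subset_span ⟨l, hb, rfl⟩))
  -- completeness of E(A ∪ B) forces w = 0
  have hw0 : w = 0 := by
    rw [MeasureTheory.Lp.eq_zero_iff_ae_eq_zero]
    refine hspec.2 (⇑w) (MeasureTheory.Lp.memLp w) ?_
    intro l hl
    have h1' : ∫ x in Om, (starRingEnd ℂ) (w x) * expF l x = 0 := by
      have : (inner ℂ w (Eb l) : ℂ) = 0 := by
        rw [← inner_conj_symm, hall l hl, map_zero]
      rw [← this, inner_Lp]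
      refine integral_congr_ae ?_
      filter_upwards [(memL2_expF hB l).coeFn_toLp] with x hx
      simp only [hEb]
      rw [hx]
    have := conj_int (Om := Om) (p := ⇑w) (q := expF l)
    rw [h1'] at this
    exact (starRingEnd ℂ).injective (by simpa using this.symm)
  have : V = (Submodule.orthogonalProjectionOnto K V : Lp ℂ 2 μ) := by
    have := sub_eq_zero.mp (hw ▸ hw0 : V - _ = 0)
    exact this
  have hVK : V ∈ K := this ▸ SetLike.coe_mem _
  exact hVK

lemma master (hB : Bornology.IsBounded Om) (hM : MeasurableSet Om)
    (A B : Set (Ed d)) (τ : Ed d)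
    (h1 : Disjoint A B)
    (h3 : Disjoint A ((fun b => b - τ) '' B))
    (hspec : IsSpectrum Om (A ∪ B))
    (ho1 : IsOrthSys Om (A ∪ (fun b => b + τ) '' B))
    (ho2 : IsOrthSys Om (A ∪ (fun b => b - τ) '' B)) :
    IsSpectrum Om (A ∪ (fun b => b + τ) '' B) := by
  refine ⟨ho1, fun f hf hforth => ?_⟩
  set g : Ed d → ℂ := fun x => f x * (starRingEnd ℂ) (expF τ x) with hg
  have hgmem : MemLp g 2 (volume.restrict Om) := by
    refine MemLp.of_le hf (hf.aestronglyMeasurable.mul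
      ((continuous_star.comp (expF_cont τ)).aestronglyMeasurable)) ?_
    filter_upwards with x
    rw [hg]
    rw [norm_mul, RCLike.norm_conj, expF_norm, mul_one]
  refine hspec.2 f hf ?_
  rintro l (ha | hb)
  · exact hforth l (Or.inl ha)
  · have hmem := mem_closure_of_orth hB hM A B hspec h1 (l - τ)
      (fun a haA => ho2 a (Or.inl haA) (l - τ) (Or.inr ⟨l, hb, rfl⟩)
        (h3.ne_of_mem haA ⟨l, hb, rfl⟩))
    have hT : ∀ t ∈ (fun b : Ed d => (memL2_expF hB b).toLp (expF b)) '' B,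
        (inner ℂ (hgmem.toLp g) t : ℂ) = 0 := by
      rintro t ⟨b', hb', rfl⟩
      rw [inner_toLp]
      have heq : ∫ x in Om, (starRingEnd ℂ) (g x) * expF b' x
          = ∫ x in Om, (starRingEnd ℂ) (f x) * expF (b' + τ) x := by
        refine integral_congr_ae (Filter.Eventually.of_forall fun x => ?_)
        rw [hg]
        simp only [map_mul, Complex.conj_conj, expF_add]
        ring
      rw [heq, conj_int, hforth (b' + τ) (Or.inr ⟨b', hb', rfl⟩), map_zero]
    have h0 : (inner ℂ (hgmem.toLp g) ((memL2_expF hB (l - τ)).toLp (expF (l - τ))) : ℂ) = 0 :=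
      closure_orth _ _ hT hmem
    rw [inner_toLp] at h0
    have h0' : ∫ x in Om, (starRingEnd ℂ) (f x) * expF l x = 0 := by
      rw [← h0]
      refine integral_congr_ae (Filter.Eventually.of_forall fun x => ?_)
      show (starRingEnd ℂ) (f x) * expF l x
          = (starRingEnd ℂ) (f x * (starRingEnd ℂ) (expF τ x)) * expF (l - τ) x
      rw [show expF l x = expF (l - τ) x * expF τ x from by rw [← expF_add, sub_add_cancel]]
      simp only [map_mul, Complex.conj_conj]
      ring
    rw [conj_int] at h0'
    exact (starRingEnd ℂ).injective (by simpa using h0')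

theorem stmt11 {d : ℕ} (Om : Set (Ed d)) (hB : Bornology.IsBounded Om)
    (hM : MeasurableSet Om) (hpos : 0 < volume Om)
    (A B : Set (Ed d)) (τ : Ed d)
    (h1 : Disjoint A B)
    (h2 : Disjoint A ((fun b => b + τ) '' B))
    (h3 : Disjoint A ((fun b => b - τ) '' B))
    (hspec : IsSpectrum Om (A ∪ B))
    (ho1 : IsOrthSys Om (A ∪ (fun b => b + τ) '' B))
    (ho2 : IsOrthSys Om (A ∪ (fun b => b - τ) '' B)) :
    IsSpectrum Om (A ∪ (fun b => b + τ) '' B) ∧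
    IsSpectrum Om (A ∪ (fun b => b - τ) '' B) := by
  refine ⟨master hB hM A B τ h1 h3 hspec ho1 ho2, ?_⟩
  have e1 : (fun b : Ed d => b + -τ) = fun b => b - τ :=
    funext fun b => (sub_eq_add_neg b τ).symm
  have e2 : (fun b : Ed d => b - -τ) = fun b => b + τ :=
    funext fun b => sub_neg_eq_add b τ
  have h := master hB hM A B (-τ) h1 (by rw [e2]; exact h2) hspec
    (by rw [e1]; exact ho2) (by rw [e2]; exact ho1)
  rw [e1] at h
  exact h
end
end

section
/- Let Ω = [−1/2, 1/2] × Σ ⊂ ℝ × ℝ^{d−1} with Σ bounded measurable of positive measure, and suppose Ω + Λ is a tiling of ℝ^d. Then for any two distinct points λ, λ' ∈ Λ, either λ'_1 − λ_1 is a non-zero integer, or the set (Σ + λ_2) ∩ (Σ + λ'_2) has measure zero in ℝ^{d−1}. -/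
open MeasureTheory Complex Set
open scoped Pointwise ENNReal RealInnerProductSpace

noncomputable section

lemma exists_mem_of_pos' {α : Type*} [MeasurableSpace α] {μ : Measure α} {A : Set α}
    {P : α → Prop} (hA : 0 < μ A) (hP : ∀ᵐ x ∂μ, P x) : ∃ x ∈ A, P x := by
  by_contra h
  push_neg at h
  exact absurd (measure_mono_null (fun x hx => h x hx) (ae_iff.mp hP)) hA.ne'
lemma line_int {T : Set ℝ}
    (hsep : ∀ t ∈ T, ∀ t' ∈ T, t ≠ t' → 1 ≤ |t - t'|)
    (hcov : ∀ᵐ x : ℝ, ∃ t ∈ T, |x - t| ≤ 1/2) :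
    ∀ t ∈ T, ∀ t' ∈ T, ∃ k : ℤ, t' - t = k := by
  have key : ∀ t ∈ T, ∀ ε : ℝ, 0 < ε → ε ≤ 1/2 → ∃ s ∈ T, t + 1 ≤ s ∧ s ≤ t + 1 + ε := by
    intro t ht ε hε hε2
    have hApos : 0 < volume (Ioo (t + 1/2) (t + 1/2 + ε)) := by
      rw [Real.volume_Ioo]
      simpa using hε
    obtain ⟨x, hx, s, hs, hxs⟩ := exists_mem_of_pos' hApos hcov
    obtain ⟨hx1, hx2⟩ := hx
    obtain ⟨hs1, hs2⟩ := abs_le.mp hxs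
    have hst : s ≠ t := by
      intro h; subst h; linarith
    have h1 := hsep s hs t ht hst
    rw [abs_of_pos (by linarith)] at h1
    exact ⟨s, hs, by linarith, by linarith⟩
  have hsucc : ∀ t ∈ T, t + 1 ∈ T := by
    intro t ht
    obtain ⟨s₀, hs₀, h1, h2⟩ := key t ht (1/2) (by norm_num) le_rfl
    have heps : ∀ ε : ℝ, 0 < ε → ε ≤ 1/2 → s₀ ≤ t + 1 + ε := by
      intro ε hε hε2
      obtain ⟨s, hs, h1', h2'⟩ := key t ht ε hε hε2
      rcases eq_or_ne s₀ s with rfl | hne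
      · linarith
      · have hb := hsep s₀ hs₀ s hs hne
        have : |s₀ - s| ≤ 1/2 := abs_le.mpr ⟨by linarith, by linarith⟩
        linarith
    have : s₀ = t + 1 := by
      by_contra hne
      have hlt : t + 1 < s₀ := lt_of_le_of_ne h1 (Ne.symm hne)
      have hε : 0 < min (1/2 : ℝ) ((s₀ - (t+1))/2) := lt_min (by norm_num) (by linarith)
      have h3 := heps _ hε (min_le_left _ _)
      have h4 := min_le_right (1/2 : ℝ) ((s₀ - (t+1))/2)
      linarith
    exact this ▸ hs₀
  have hiter : ∀ k : ℕ, ∀ t ∈ T, t + k ∈ T := by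
    intro k
    induction k with
    | zero => simpa using fun t ht => ht
    | succ m ih =>
      intro t ht
      have := hsucc _ (ih t ht)
      convert this using 1
      push_cast; ring
  have main : ∀ t ∈ T, ∀ t' ∈ T, t ≤ t' → ∃ k : ℤ, t' - t = k := by
    intro t ht t' ht' hle
    set k : ℕ := ⌊t' - t⌋₊ with hk
    have h1 : (k : ℝ) ≤ t' - t := Nat.floor_le (by linarith)
    have h2 : t' - t < k + 1 := Nat.lt_floor_add_one _
    have hm : t + k ∈ T := hiter k t ht
    rcases eq_or_ne (t + k) t' with he | he
    · exact ⟨k, by push_cast; linarith⟩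
    · have hb := hsep _ hm _ ht' he
      have : |t + k - t'| < 1 := abs_lt.mpr ⟨by linarith, by linarith⟩
      linarith
  intro t ht t' ht'
  rcases le_total t t' with h | h
  · exact main t ht t' ht' h
  · obtain ⟨k, hk⟩ := main t' ht' t ht h
    exact ⟨-k, by push_cast; linarith⟩
theorem stmt13 {n : ℕ} (S : Set (Ed n)) (hB : Bornology.IsBounded S)
    (hM : MeasurableSet S) (hpos : 0 < volume S) (L : Set (ℝ × Ed n))
    (htile : IsTiling
      (Set.indicator ((Set.Icc (-(1/2) : ℝ) (1/2)) ×ˢ S) (fun _ => (1 : ℝ))) L) :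
    ∀ l ∈ L, ∀ l' ∈ L, l ≠ l' →
      (∃ k : ℤ, k ≠ 0 ∧ l'.1 - l.1 = (k : ℝ)) ∨
      volume (((fun y => y + l.2) '' S) ∩ ((fun y => y + l'.2) '' S)) = 0 := by
  classical
  intro l hl l' hl' hne
  set f : Ed n → ℝ → ↥L → ℝ≥0∞ := fun y x m =>
    ENNReal.ofReal (Set.indicator ((Set.Icc (-(1/2) : ℝ) (1/2)) ×ˢ S) (fun _ => (1 : ℝ))
      ((x, y) - (m : ℝ × Ed n))) with hf
  have hfval : ∀ (y : Ed n) (x : ℝ) (m : ↥L),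
      f y x m = if (x - (m : ℝ × Ed n).1 ∈ Set.Icc (-(1/2) : ℝ) (1/2) ∧ y - (m : ℝ × Ed n).2 ∈ S)
        then 1 else 0 := by
    intro y x m
    rw [hf]
    simp only [Set.indicator_apply, Set.mem_prod, Prod.fst_sub, Prod.snd_sub]
    split <;> simp
  have htile' : ∀ᵐ y : Ed n, ∀ᵐ x : ℝ, ∑' m : ↥L, f y x m = 1 := by
    have hsw : ∀ᵐ z : Ed n × ℝ ∂((volume : Measure (Ed n)).prod (volume : Measure ℝ)),
        ∑' m : ↥L, f z.1 z.2 m = 1 := by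
      have hq : MeasureTheory.Measure.QuasiMeasurePreserving (Prod.swap : Ed n × ℝ → ℝ × Ed n)
          ((volume : Measure (Ed n)).prod (volume : Measure ℝ)) (volume : Measure (ℝ × Ed n)) := by
        rw [MeasureTheory.Measure.volume_eq_prod]
        exact MeasureTheory.Measure.measurePreserving_swap.quasiMeasurePreserving
      have := hq.ae htile
      filter_upwards [this] with z hz
      simpa [hf, Prod.swap] using hz
    exact MeasureTheory.Measure.ae_ae_of_ae_prod hsw
  by_contra hcon
  push_neg at hcon
  obtain ⟨hk, hvol⟩ := hcon
  apply hvol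
  have himg : ((fun y => y + l.2) '' S) ∩ ((fun y => y + l'.2) '' S)
      = {y : Ed n | y - l.2 ∈ S ∧ y - l'.2 ∈ S} := by
    ext y
    simp only [Set.mem_inter_iff, Set.mem_image, Set.mem_setOf_eq]
    constructor
    · rintro ⟨⟨a, ha, rfl⟩, ⟨b, hb, hby⟩⟩
      constructor
      · simpa using ha
      · have hab : a + l.2 - l'.2 = b := by rw [← hby]; abel
        rw [hab]; exact hb
    · rintro ⟨h1, h2⟩
      exact ⟨⟨y - l.2, h1, by abel⟩, ⟨y - l'.2, h2, by abel⟩⟩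
  rw [himg]
  refine measure_mono_null ?_ (ae_iff.mp htile')
  intro y hy Hy
  obtain ⟨hy1, hy2⟩ := hy
  -- per-fiber separation
  have sep' : ∀ m ∈ L, ∀ m' ∈ L, y - m.2 ∈ S → y - m'.2 ∈ S → m ≠ m' →
      1 ≤ |m.1 - m'.1| := by
    intro m hm m' hm' hS hS' hmm
    by_contra hlt
    push_neg at hlt
    have hApos : 0 < volume (Set.Ioo (max m.1 m'.1 - 1/2) (min m.1 m'.1 + 1/2)) := by
      rw [Real.volume_Ioo]
      apply ENNReal.ofReal_pos.mpr
      have hms := max_sub_min_eq_abs m.1 m'.1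
      rw [abs_sub_comm m.1 m'.1] at hlt
      linarith
    obtain ⟨x, hxA, hx⟩ := exists_mem_of_pos' hApos Hy
    obtain ⟨hxa, hxb⟩ := hxA
    have h1 : f y x ⟨m, hm⟩ = 1 := by
      rw [hfval, if_pos]
      refine ⟨Set.mem_Icc.mpr ⟨?_, ?_⟩, hS⟩
      · have := le_max_left m.1 m'.1; linarith
      · have := min_le_left m.1 m'.1; linarith
    have h2 : f y x ⟨m', hm'⟩ = 1 := by
      rw [hfval, if_pos]
      refine ⟨Set.mem_Icc.mpr ⟨?_, ?_⟩, hS'⟩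
      · have := le_max_right m.1 m'.1; linarith
      · have := min_le_right m.1 m'.1; linarith
    have hij : (⟨m, hm⟩ : ↥L) ≠ ⟨m', hm'⟩ := by simpa using hmm
    have hsum : f y x ⟨m, hm⟩ + f y x ⟨m', hm'⟩ ≤ ∑' mm : ↥L, f y x mm := by
      have h := ENNReal.sum_le_tsum (f := f y x) ({⟨m, hm⟩, ⟨m', hm'⟩} : Finset ↥L)
      rwa [Finset.sum_pair hij] at h
    rw [h1, h2, hx] at hsum
    norm_num at hsum
  set T : Set ℝ := {t | ∃ m, m ∈ L ∧ m.1 = t ∧ y - m.2 ∈ S} with hT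
  have hsep : ∀ t ∈ T, ∀ t' ∈ T, t ≠ t' → 1 ≤ |t - t'| := by
    rintro t ⟨m, hm, rfl, hS⟩ t' ⟨m', hm', rfl, hS'⟩ htt
    exact sep' m hm m' hm' hS hS' (fun h => htt (by rw [h]))
  have hcov : ∀ᵐ x : ℝ, ∃ t ∈ T, |x - t| ≤ 1/2 := by
    filter_upwards [Hy] with x hx
    have hne0 : ¬ ∀ m : ↥L, f y x m = 0 := by
      intro h
      rw [ENNReal.tsum_eq_zero.mpr h] at hx
      exact zero_ne_one hx
    push_neg at hne0
    obtain ⟨m, hm0⟩ := hne0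
    rw [hfval] at hm0
    split at hm0
    case isTrue h =>
      obtain ⟨hIcc, hS⟩ := h
      obtain ⟨ha, hb⟩ := Set.mem_Icc.mp hIcc
      exact ⟨(m : ℝ × Ed n).1, ⟨(m : ℝ × Ed n), m.property, rfl, hS⟩,
        abs_le.mpr ⟨by linarith, by linarith⟩⟩
    case isFalse => exact absurd rfl hm0
  obtain ⟨k, hkk⟩ := line_int hsep hcov l.1 ⟨l, hl, rfl, hy1⟩ l'.1 ⟨l', hl', rfl, hy2⟩
  rcases eq_or_ne k 0 with rfl | hk0
  · have hs := sep' l hl l' hl' hy1 hy2 hne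
    have h0 : l.1 - l'.1 = 0 := by push_cast at hkk; linarith
    rw [h0, abs_zero] at hs
    linarith
  · exact hk k hk0 hkk
end
end

section
/- Let Ω = [−1/2, 1/2] × Σ ⊂ ℝ × ℝ^{d−1} with Σ bounded measurable of positive measure, and let t ∈ ℝ. Define α_t(λ) := λ if λ_1 ∈ ℤ and α_t(λ) := λ + (t, 0, …, 0) if λ_1 ∉ ℤ. If Λ is a spectrum for Ω, then α_t is injective on Λ and α_t(Λ) is also a spectrum for Ω. -/
open MeasureTheory Complex Set
open scoped Pointwise ENNReal RealInnerProductSpace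

noncomputable section

/-- The exponential `e_λ` on the product space `ℝ × ℝ^{d-1}`. -/
def expP {n : ℕ} (l x : ℝ × Ed n) : ℂ :=
  Complex.exp (2 * Real.pi * Complex.I * Complex.ofReal (l.1 * x.1 + (inner ℝ l.2 x.2 : ℝ)))

/-- `Λ` is a spectrum for `Ω ⊆ ℝ × ℝ^{d-1}`. -/
def IsSpectrumP {n : ℕ} (Om L : Set (ℝ × Ed n)) : Prop :=
  (∀ l ∈ L, ∀ m ∈ L, l ≠ m →
    ∫ x in Om, expP l x * (starRingEnd ℂ) (expP m x) = 0) ∧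
  ∀ f : ℝ × Ed n → ℂ, MemLp f 2 (volume.restrict Om) →
    (∀ l ∈ L, ∫ x in Om, f x * (starRingEnd ℂ) (expP l x) = 0) →
    f =ᵐ[volume.restrict Om] 0

open Classical in
/-- The map `α_t` fixing points with integer first coordinate and shifting the others by `t`. -/
def alphaT {n : ℕ} (t : ℝ) (l : ℝ × Ed n) : ℝ × Ed n :=
  if ∃ k : ℤ, l.1 = (k : ℝ) then l else (l.1 + t, l.2)

/-! ### Auxiliary lemmas -/

section Aux

variable {n : ℕ}

lemma expP_mul_conj (l m x : ℝ × Ed n) :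
    expP l x * (starRingEnd ℂ) (expP m x) = expP (l - m) x := by
  simp only [expP, ← Complex.exp_conj, ← Complex.exp_add]
  congr 1
  simp only [map_mul, Complex.conj_I, Complex.conj_ofReal, map_ofNat]
  have h1 : ((l - m).1 : ℝ) = l.1 - m.1 := rfl
  have h3 : (inner ℝ (l - m).2 x.2 : ℝ) = (inner ℝ l.2 x.2 : ℝ) - (inner ℝ m.2 x.2 : ℝ) := by
    have : (l - m).2 = l.2 - m.2 := rfl
    rw [this, inner_sub_left]
  rw [h1, h3]
  push_cast
  ring

lemma expP_norm (l x : ℝ × Ed n) : ‖expP l x‖ = 1 := by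
  rw [expP, Complex.norm_exp]
  have : (2 * Real.pi * Complex.I * Complex.ofReal (l.1 * x.1 + (inner ℝ l.2 x.2 : ℝ))).re = 0 := by
    simp [Complex.mul_re, Complex.mul_im]
  rw [this, Real.exp_zero]

lemma expP_continuous (l : ℝ × Ed n) : Continuous (expP l) := by
  apply Complex.continuous_exp.comp
  apply continuous_const.mul
  apply Complex.continuous_ofReal.comp
  exact (continuous_const.mul continuous_fst).add
    (Continuous.inner continuous_const continuous_snd)

/-- The 1-dimensional factor integral. -/
def I1 (a : ℝ) : ℂ :=
  ∫ x in Icc (-(1/2) : ℝ) (1/2), Complex.exp (2 * Real.pi * Complex.I * (a * x : ℝ))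

/-- The Σ factor integral. -/
def I2 (S : Set (Ed n)) (b : Ed n) : ℂ :=
  ∫ y in S, Complex.exp (2 * Real.pi * Complex.I * ((inner ℝ b y : ℝ) : ℂ))

lemma integral_expP (S : Set (Ed n)) (l : ℝ × Ed n) :
    ∫ x in (Icc (-(1/2) : ℝ) (1/2)) ×ˢ S, expP l x = I1 l.1 * I2 S l.2 := by
  rw [I1, I2, ← setIntegral_prod_mul]
  rw [Measure.volume_eq_prod]
  congr 1
  ext x
  rw [expP, ← Complex.exp_add]
  congr 1
  push_cast
  ring

lemma I1_ne_zero {a : ℝ} (ha : ¬ ∃ k : ℤ, a = (k : ℝ)) : I1 a ≠ 0 := by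
  have ha0 : (a : ℂ) ≠ 0 := by
    simp only [ne_eq, Complex.ofReal_eq_zero]
    rintro rfl; exact ha ⟨0, by simp⟩
  have hc : (2 * Real.pi * Complex.I * a : ℂ) ≠ 0 := by
    apply mul_ne_zero (mul_ne_zero (mul_ne_zero two_ne_zero ?_) Complex.I_ne_zero) ha0
    simpa using Real.pi_ne_zero
  have h1 : I1 a = ∫ x in (-(1/2) : ℝ)..(1/2), Complex.exp ((2 * Real.pi * Complex.I * a) * x) := by
    rw [I1, intervalIntegral.integral_of_le (by norm_num), integral_Icc_eq_integral_Ioc]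
    congr 1; ext x; push_cast; ring_nf
  rw [h1, integral_exp_mul_complex hc]
  apply div_ne_zero _ hc
  rw [sub_ne_zero]
  intro h
  rw [Complex.exp_eq_exp_iff_exists_int] at h
  obtain ⟨k, hk⟩ := h
  apply ha ⟨k, ?_⟩
  have h2 : (2 * Real.pi * Complex.I) * a = (2 * Real.pi * Complex.I) * k := by
    push_cast at hk ⊢
    ring_nf at hk ⊢
    linear_combination hk
  have := mul_left_cancel₀ (by
    apply mul_ne_zero (mul_ne_zero two_ne_zero ?_) Complex.I_ne_zero
    simpa using Real.pi_ne_zero) h2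
  exact_mod_cast this

lemma vol_Om_lt_top {S : Set (Ed n)} (hB : Bornology.IsBounded S) :
    volume ((Icc (-(1/2) : ℝ) (1/2)) ×ˢ S) < ⊤ := by
  rw [Measure.volume_eq_prod, Measure.prod_prod]
  exact ENNReal.mul_lt_top (by simp) hB.measure_lt_top

lemma isFiniteOm {S : Set (Ed n)} (hB : Bornology.IsBounded S) :
    IsFiniteMeasure (volume.restrict ((Icc (-(1/2) : ℝ) (1/2)) ×ˢ S)) := by
  constructor
  rw [Measure.restrict_apply_univ]
  exact vol_Om_lt_top hB

lemma I2_zero_ne {S : Set (Ed n)} (hB : Bornology.IsBounded S) (hpos : 0 < volume S) :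
    I2 S 0 ≠ 0 := by
  have : I2 S 0 = ((volume S).toReal : ℂ) := by
    rw [I2]; simp [setIntegral_const, Measure.real]
  rw [this]
  simp only [ne_eq, Complex.ofReal_eq_zero]
  have := ENNReal.toReal_pos hpos.ne' hB.measure_lt_top.ne
  positivity

lemma memLp_expP {S : Set (Ed n)} (hB : Bornology.IsBounded S) (l : ℝ × Ed n) :
    MemLp (expP l) 2 (volume.restrict ((Icc (-(1/2) : ℝ) (1/2)) ×ˢ S)) := by
  have := isFiniteOm (S := S) hB
  apply MemLp.of_bound (expP_continuous l).aestronglyMeasurable 1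
  filter_upwards with x using le_of_eq (expP_norm l x)

section Hilbert

variable {H : Type*} [NormedAddCommGroup H] [InnerProductSpace ℂ H] [CompleteSpace H]

local notation "⟪" x ", " y "⟫" => @inner ℂ _ _ x y

omit [CompleteSpace H] in
lemma mem_orthogonal_span {s : Set H} {x : H} (h : ∀ v ∈ s, ⟪v, x⟫ = 0) :
    x ∈ (Submodule.span ℂ s)ᗮ := by
  rw [Submodule.mem_orthogonal]
  intro u hu
  induction hu using Submodule.span_induction with
  | mem v hv => exact h v hv
  | zero => simp
  | add a b _ _ ha hb => rw [inner_add_left, ha, hb, add_zero]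
  | smul c a _ ha => rw [inner_smul_left, ha, mul_zero]

omit [CompleteSpace H] in
lemma triple_orth (K : Submodule ℂ H) : Kᗮᗮᗮ = Kᗮ :=
  le_antisymm (Submodule.orthogonal_le K.le_orthogonal_orthogonal)
    (Kᗮ).le_orthogonal_orthogonal

lemma hilbert_key {s₀ s₁ : Set H}
    (horth : ∀ v ∈ s₀, ∀ w ∈ s₁, ⟪v, w⟫ = 0)
    (htotal : (Submodule.span ℂ (s₀ ∪ s₁))ᗮ = ⊥)
    {u F : H}
    (hu : ∀ w ∈ s₁, ⟪w, u⟫ = 0)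
    (hF : ∀ v ∈ s₀, ⟪v, F⟫ = 0) :
    ⟪u, F⟫ = 0 := by
  set K₀ := Submodule.span ℂ s₀ with hK₀
  set K₁ := Submodule.span ℂ s₁ with hK₁
  have hFo : F ∈ K₀ᗮ := mem_orthogonal_span hF
  have huo : u ∈ K₁ᗮ := mem_orthogonal_span hu
  have hle : K₀ᗮᗮ ≤ K₁ᗮ := by
    have h01 : K₀ ≤ K₁ᗮ := by
      rw [hK₀, Submodule.span_le]
      intro v hv
      rw [SetLike.mem_coe]
      apply mem_orthogonal_span
      intro w hw
      exact inner_eq_zero_symm.mp (horth v hv w hw)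
    calc K₀ᗮᗮ ≤ K₁ᗮᗮᗮ := Submodule.orthogonal_orthogonal_monotone h01
    _ = K₁ᗮ := triple_orth K₁
  haveI hcs : CompleteSpace (K₀ᗮᗮ : Submodule ℂ H) :=
    (Submodule.isClosed_orthogonal _).completeSpace_coe
  haveI : Submodule.HasOrthogonalProjection (K₀ᗮᗮ) :=
    Submodule.HasOrthogonalProjection.ofCompleteSpace _
  obtain ⟨y, hy, z, hz, rfl⟩ := (K₀ᗮᗮ).exists_add_mem_mem_orthogonal u
  have hz0 : z = 0 := by
    have hz1 : z ∈ K₁ᗮ := by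
      have : z = (y + z) - y := by abel
      rw [this]
      exact Submodule.sub_mem _ huo (hle hy)
    have hz0' : z ∈ K₀ᗮ := by rw [← triple_orth K₀]; exact hz
    have : z ∈ (K₀ ⊔ K₁)ᗮ := by
      rw [← Submodule.inf_orthogonal]
      exact ⟨hz0', hz1⟩
    rw [← Submodule.span_union, htotal] at this
    simpa using this
  rw [hz0, add_zero]
  exact Submodule.inner_right_of_mem_orthogonal hy ((triple_orth K₀).symm ▸ hFo)

end Hilbert

end Aux

lemma alphaT_int {n : ℕ} {t : ℝ} {l : ℝ × Ed n} (h : ∃ k : ℤ, l.1 = (k : ℝ)) :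
    alphaT t l = l := by
  rw [alphaT, if_pos h]

lemma alphaT_nonint {n : ℕ} {t : ℝ} {l : ℝ × Ed n} (h : ¬ ∃ k : ℤ, l.1 = (k : ℝ)) :
    alphaT t l = (l.1 + t, l.2) := by
  rw [alphaT, if_neg h]

theorem stmt14 {n : ℕ} (S : Set (Ed n)) (hB : Bornology.IsBounded S)
    (hM : MeasurableSet S) (hpos : 0 < volume S) (t : ℝ) (L : Set (ℝ × Ed n))
    (hspec : IsSpectrumP ((Set.Icc (-(1/2) : ℝ) (1/2)) ×ˢ S) L) :
    Set.InjOn (alphaT t) L ∧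
    IsSpectrumP ((Set.Icc (-(1/2) : ℝ) (1/2)) ×ˢ S) (alphaT t '' L) := by
  classical
  obtain ⟨horthL, hcomp⟩ := hspec
  set Om : Set (ℝ × Ed n) := (Icc (-(1/2) : ℝ) (1/2)) ×ˢ S with hOm
  haveI := isFiniteOm (S := S) hB
  have hint : ∀ l m : ℝ × Ed n,
      (∫ x in Om, expP l x * (starRingEnd ℂ) (expP m x)) = I1 (l.1 - m.1) * I2 S (l.2 - m.2) := by
    intro l m
    simp_rw [expP_mul_conj]
    rw [hOm]
    exact integral_expP S (l - m)
  have horth' : ∀ l ∈ L, ∀ m ∈ L, l ≠ m → I1 (l.1 - m.1) * I2 S (l.2 - m.2) = 0 := by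
    intro l hl m hm hne
    rw [← hint]; exact horthL l hl m hm hne
  have hdiffint : ∀ a b : ℝ, (∃ k : ℤ, a = (k : ℝ)) → ¬(∃ k : ℤ, b = (k : ℝ)) →
      ¬ ∃ k : ℤ, a - b = (k : ℝ) := by
    rintro a b ⟨k, rfl⟩ hb ⟨j, hj⟩
    exact hb ⟨k - j, by push_cast; linarith⟩
  have hmix : ∀ l ∈ L, ∀ m ∈ L, (∃ k : ℤ, l.1 = (k : ℝ)) → ¬(∃ k : ℤ, m.1 = (k : ℝ)) →
      I2 S (l.2 - m.2) = 0 := by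
    intro l hl m hm hIl hIm
    have hne : l ≠ m := by rintro rfl; exact hIm hIl
    rcases mul_eq_zero.mp (horth' l hl m hm hne) with h | h
    · exact absurd h (I1_ne_zero (hdiffint _ _ hIl hIm))
    · exact h
  have hmix' : ∀ l ∈ L, ∀ m ∈ L, ¬(∃ k : ℤ, l.1 = (k : ℝ)) → (∃ k : ℤ, m.1 = (k : ℝ)) →
      I2 S (l.2 - m.2) = 0 := by
    intro l hl m hm hIl hIm
    have hne : l ≠ m := by rintro rfl; exact hIl hIm
    rcases mul_eq_zero.mp (horth' l hl m hm hne) with h | h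
    · refine absurd h (I1_ne_zero ?_)
      rintro ⟨j, hj⟩
      obtain ⟨k, hk⟩ := hIm
      exact hIl ⟨j + k, by rw [hk] at hj; push_cast; linarith⟩
    · exact h
  have hinj : Set.InjOn (alphaT t) L := by
    intro l hl m hm he
    by_cases hIl : ∃ k : ℤ, l.1 = (k : ℝ) <;> by_cases hIm : ∃ k : ℤ, m.1 = (k : ℝ)
    · rwa [alphaT_int hIl, alphaT_int hIm] at he
    · rw [alphaT_int hIl, alphaT_nonint hIm] at he
      exfalso
      have h2 := congrArg Prod.snd he
      dsimp only at h2
      have hne : l ≠ m := by rintro rfl; exact hIm hIl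
      have h0 := horth' l hl m hm hne
      rw [h2, sub_self] at h0
      rcases mul_eq_zero.mp h0 with h | h
      · exact I1_ne_zero (hdiffint _ _ hIl hIm) h
      · exact I2_zero_ne hB hpos h
    · rw [alphaT_nonint hIl, alphaT_int hIm] at he
      exfalso
      have h2 := congrArg Prod.snd he
      dsimp only at h2
      have hne : l ≠ m := by rintro rfl; exact hIl hIm
      have h0 := horth' m hm l hl hne.symm
      rw [h2, sub_self] at h0
      rcases mul_eq_zero.mp h0 with h | h
      · exact I1_ne_zero (hdiffint _ _ hIm hIl) h
      · exact I2_zero_ne hB hpos h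
    · rw [alphaT_nonint hIl, alphaT_nonint hIm] at he
      have h1 := congrArg Prod.fst he
      have h2 := congrArg Prod.snd he
      dsimp only at h1 h2
      exact Prod.ext (by linarith) h2
  refine ⟨hinj, ?_, ?_⟩
  · -- orthogonality of the image system
    rintro _ ⟨l, hl, rfl⟩ _ ⟨m, hm, rfl⟩ hne
    have hlm : l ≠ m := by rintro rfl; exact hne rfl
    rw [hint]
    by_cases hIl : ∃ k : ℤ, l.1 = (k : ℝ) <;> by_cases hIm : ∃ k : ℤ, m.1 = (k : ℝ)
    · rw [alphaT_int hIl, alphaT_int hIm]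
      exact horth' l hl m hm hlm
    · rw [alphaT_int hIl, alphaT_nonint hIm]
      exact mul_eq_zero_of_right _ (hmix l hl m hm hIl hIm)
    · rw [alphaT_nonint hIl, alphaT_int hIm]
      exact mul_eq_zero_of_right _ (hmix' l hl m hm hIl hIm)
    · rw [alphaT_nonint hIl, alphaT_nonint hIm]
      show I1 (l.1 + t - (m.1 + t)) * I2 S (l.2 - m.2) = 0
      have hr : l.1 + t - (m.1 + t) = l.1 - m.1 := by ring
      rw [hr]
      exact horth' l hl m hm hlm
  · -- completeness of the image system
    intro f hf hforth
    have hshift : ∀ a x : ℝ × Ed n,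
        expP (a.1 + t, a.2) x
          = Complex.exp (2 * Real.pi * Complex.I * ((t * x.1 : ℝ) : ℂ)) * expP a x := by
      intro a x
      rw [expP, expP, ← Complex.exp_add]
      congr 1
      push_cast
      ring
    have hconj : ∀ r : ℝ, (starRingEnd ℂ) (Complex.exp (2 * Real.pi * Complex.I * (r : ℂ)))
        = Complex.exp (-(2 * Real.pi * Complex.I * (r : ℂ))) := by
      intro r
      rw [← Complex.exp_conj]
      congr 1
      simp only [map_mul, map_ofNat, Complex.conj_I, Complex.conj_ofReal]
      ring
    set g : ℝ × Ed n → ℂ :=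
      fun x => f x * Complex.exp (-(2 * Real.pi * Complex.I * ((t * x.1 : ℝ) : ℂ))) with hgdef
    have hptw : ∀ a x : ℝ × Ed n, g x * (starRingEnd ℂ) (expP a x)
        = f x * (starRingEnd ℂ) (expP (a.1 + t, a.2) x) := by
      intro a x
      rw [hshift, map_mul, hconj, hgdef]
      ring
    have hgm : MemLp g 2 (volume.restrict Om) := by
      have hc : Continuous fun x : ℝ × Ed n =>
          Complex.exp (-(2 * Real.pi * Complex.I * ((t * x.1 : ℝ) : ℂ))) := by
        apply Complex.continuous_exp.comp
        exact (continuous_const.mul (Complex.continuous_ofReal.comp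
          (continuous_const.mul continuous_fst))).neg
      apply MemLp.of_le hf (hf.aestronglyMeasurable.mul hc.aestronglyMeasurable)
      filter_upwards with x
      simp only [Pi.mul_apply]
      rw [norm_mul]
      have h5 : ‖Complex.exp (-(2 * Real.pi * Complex.I * ((t * x.1 : ℝ) : ℂ)))‖ = 1 := by
        rw [Complex.norm_exp]
        norm_num [Complex.mul_re, Complex.mul_im]
      rw [h5, mul_one]
    have h0 : ∀ l ∈ L, (∃ k : ℤ, l.1 = (k : ℝ)) →
        ∫ x in Om, f x * (starRingEnd ℂ) (expP l x) = 0 := by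
      intro l hl hIl
      have h6 := hforth (alphaT t l) ⟨l, hl, rfl⟩
      rwa [alphaT_int hIl] at h6
    have h1 : ∀ l ∈ L, ¬(∃ k : ℤ, l.1 = (k : ℝ)) →
        ∫ x in Om, g x * (starRingEnd ℂ) (expP l x) = 0 := by
      intro l hl hIl
      have h2 := hforth (alphaT t l) ⟨l, hl, rfl⟩
      rw [alphaT_nonint hIl] at h2
      rw [← h2]
      exact integral_congr_ae (Filter.Eventually.of_forall fun x => hptw l x)
    set E : (ℝ × Ed n) → Lp ℂ 2 (volume.restrict Om) :=
      fun m => (memLp_expP hB m).toLp (expP m) with hE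
    have hinner : ∀ (a : ℝ × Ed n) (v : ℝ × Ed n → ℂ) (hv : MemLp v 2 (volume.restrict Om)),
        (inner ℂ (E a) (hv.toLp v) : ℂ) = ∫ x in Om, v x * (starRingEnd ℂ) (expP a x) := by
      intro a v hv
      rw [hE, L2.inner_def]
      apply integral_congr_ae
      filter_upwards [(memLp_expP hB a).coeFn_toLp, hv.coeFn_toLp] with x hx1 hx2
      rw [hx1, hx2, RCLike.inner_apply', mul_comm]
    have hkey : ∀ l ∈ L, (∃ k : ℤ, l.1 = (k : ℝ)) →
        ∫ x in Om, g x * (starRingEnd ℂ) (expP l x) = 0 := by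
      intro l hl hIl
      have hred : ∫ x in Om, g x * (starRingEnd ℂ) (expP l x)
          = ∫ x in Om, f x * (starRingEnd ℂ) (expP (l.1 + t, l.2) x) :=
        integral_congr_ae (Filter.Eventually.of_forall fun x => hptw l x)
      rw [hred, ← hinner (l.1 + t, l.2) f hf]
      refine hilbert_key (s₀ := E '' {m | m ∈ L ∧ ∃ k : ℤ, m.1 = (k : ℝ)})
        (s₁ := E '' {m | m ∈ L ∧ ¬ ∃ k : ℤ, m.1 = (k : ℝ)}) ?_ ?_ ?_ ?_
      · rintro _ ⟨a, ⟨haL, haI⟩, rfl⟩ _ ⟨b, ⟨hbL, hbI⟩, rfl⟩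
        refine (hinner a (expP b) (memLp_expP hB b)).trans ?_
        rw [hint]
        exact mul_eq_zero_of_right _ (hmix' b hbL a haL hbI haI)
      · rw [Submodule.eq_bot_iff]
        intro u hu
        have hu' : ∀ m ∈ L, ∫ x in Om, (u : ℝ × Ed n → ℂ) x * (starRingEnd ℂ) (expP m x) = 0 := by
          intro m hm
          have hmem : E m ∈ (E '' {m | m ∈ L ∧ ∃ k : ℤ, m.1 = (k : ℝ)}
              ∪ E '' {m | m ∈ L ∧ ¬ ∃ k : ℤ, m.1 = (k : ℝ)}) := by
            by_cases him : ∃ k : ℤ, m.1 = (k : ℝ)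
            · exact Or.inl ⟨m, ⟨hm, him⟩, rfl⟩
            · exact Or.inr ⟨m, ⟨hm, him⟩, rfl⟩
          have h3 := (Submodule.mem_orthogonal _ u).mp hu (E m) (Submodule.subset_span hmem)
          have h4 := hinner m (↑u) (Lp.memLp u)
          rw [Lp.toLp_coeFn u (Lp.memLp u)] at h4
          rw [← h4, h3]
        have h7 := hcomp (↑u) (Lp.memLp u) hu'
        exact Lp.eq_zero_iff_ae_eq_zero.mpr h7
      · rintro _ ⟨b, ⟨hbL, hbI⟩, rfl⟩
        refine (hinner b (expP (l.1 + t, l.2)) (memLp_expP hB _)).trans ?_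
        rw [hint]
        exact mul_eq_zero_of_right _ (hmix l hl b hbL hIl hbI)
      · rintro _ ⟨a, ⟨haL, haI⟩, rfl⟩
        exact (hinner a f hf).trans (h0 a haL haI)
    have hgzero : g =ᵐ[volume.restrict Om] 0 := by
      apply hcomp g hgm
      intro l hl
      by_cases hIl : ∃ k : ℤ, l.1 = (k : ℝ)
      · exact hkey l hl hIl
      · exact h1 l hl hIl
    filter_upwards [hgzero] with x hx
    have hx' : f x * Complex.exp (-(2 * Real.pi * Complex.I * ((t * x.1 : ℝ) : ℂ))) = 0 := hx
    rcases mul_eq_zero.mp hx' with h | h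
    · exact h
    · exact absurd h (Complex.exp_ne_zero _)
end
end

section
/- Let Ω = [−1/2, 1/2] × Σ ⊂ ℝ × ℝ^{d−1} with Σ bounded measurable of positive measure, and let t ∈ ℝ. Define α_t(λ) := λ if λ_1 ∈ ℤ and α_t(λ) := λ + (t, 0, …, 0) if λ_1 ∉ ℤ. If Ω + Λ is a tiling, then α_t is injective on Λ and Ω + α_t(Λ) is also a tiling. -/
open MeasureTheory Complex Set
open scoped Pointwise ENNReal RealInnerProductSpace

noncomputable section

open Classical in
private def Fsl {n : ℕ} (S : Set (Ed n)) (L : Set (ℝ × Ed n)) (y : Ed n) (x : ℝ) : ℝ≥0∞ :=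
  ∑' l : L, if x - (l : ℝ × Ed n).1 ∈ Set.Icc (-(1/2) : ℝ) (1/2) ∧ y - (l : ℝ × Ed n).2 ∈ S
    then 1 else 0

variable {n : ℕ} {S : Set (Ed n)} {L : Set (ℝ × Ed n)} {y : Ed n}

private lemma Fsl_sep (hy : ∀ᵐ x : ℝ, Fsl S L y x = 1) {l m : ℝ × Ed n}
    (hl : l ∈ L) (hm : m ∈ L) (hlS : y - l.2 ∈ S) (hmS : y - m.2 ∈ S) (hne : l ≠ m) :
    1 ≤ |l.1 - m.1| := by
  classical
  by_contra hcon
  push_neg at hcon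
  rw [abs_sub_lt_iff] at hcon
  have hab : max l.1 m.1 - 1/2 < min l.1 m.1 + 1/2 := by
    rcases max_cases l.1 m.1 with ⟨h1, h2⟩ | ⟨h1, h2⟩ <;>
      rcases min_cases l.1 m.1 with ⟨h3, h4⟩ | ⟨h3, h4⟩ <;> rw [h1, h3] <;>
      linarith [hcon.1, hcon.2]
  have hsub : Set.Ioo (max l.1 m.1 - 1/2) (min l.1 m.1 + 1/2) ⊆ {x : ℝ | ¬ Fsl S L y x = 1} := by
    intro x hx
    rw [Set.mem_Ioo] at hx
    have hxl : x - l.1 ∈ Set.Icc (-(1/2) : ℝ) (1/2) := by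
      rw [Set.mem_Icc]
      constructor
      · linarith [le_max_left l.1 m.1, hx.1]
      · linarith [min_le_left l.1 m.1, hx.2]
    have hxm : x - m.1 ∈ Set.Icc (-(1/2) : ℝ) (1/2) := by
      rw [Set.mem_Icc]
      constructor
      · linarith [le_max_right l.1 m.1, hx.1]
      · linarith [min_le_right l.1 m.1, hx.2]
    intro heq1
    have hmemne : (⟨l, hl⟩ : L) ≠ (⟨m, hm⟩ : L) := by
      simpa [Subtype.ext_iff] using hne
    have hfs : ∑ i ∈ ({⟨l, hl⟩, ⟨m, hm⟩} : Finset L),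
        (if x - (i : ℝ × Ed n).1 ∈ Set.Icc (-(1/2) : ℝ) (1/2) ∧ y - (i : ℝ × Ed n).2 ∈ S
          then (1 : ℝ≥0∞) else 0) = 2 := by
      rw [Finset.sum_insert (by simpa using hmemne), Finset.sum_singleton,
        if_pos ⟨hxl, hlS⟩, if_pos ⟨hxm, hmS⟩]
      norm_num
    have hle : (2 : ℝ≥0∞) ≤ Fsl S L y x := by
      unfold Fsl
      exact le_trans (le_of_eq hfs.symm) (ENNReal.sum_le_tsum _)
    rw [heq1] at hle
    norm_num at hle
  have h0 := measure_mono_null hsub (ae_iff.mp hy)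
  rw [Real.volume_Ioo] at h0
  exact absurd h0 (ne_of_gt (ENNReal.ofReal_pos.mpr (by linarith)))

private lemma Fsl_cover (hy : ∀ᵐ x : ℝ, Fsl S L y x = 1) {a b : ℝ} (hab : a < b) :
    ∃ x ∈ Set.Ioo a b, ∃ l : L, x - (l : ℝ × Ed n).1 ∈ Set.Icc (-(1/2) : ℝ) (1/2) ∧
      y - (l : ℝ × Ed n).2 ∈ S := by
  classical
  have hne : ¬ (Set.Ioo a b ⊆ {x : ℝ | ¬ Fsl S L y x = 1}) := by
    intro hsub
    have h0 := measure_mono_null hsub (ae_iff.mp hy)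
    rw [Real.volume_Ioo] at h0
    exact absurd h0 (ne_of_gt (ENNReal.ofReal_pos.mpr (by linarith)))
  obtain ⟨x, hx, hgood⟩ := Set.not_subset.mp hne
  rw [Set.mem_setOf_eq, not_not] at hgood
  refine ⟨x, hx, ?_⟩
  by_contra hall
  push_neg at hall
  have h0 : Fsl S L y x = 0 := by
    unfold Fsl
    exact ENNReal.tsum_eq_zero.mpr fun l => if_neg (fun hc => hall l hc.1 hc.2)
  rw [hgood] at h0
  exact one_ne_zero h0

private lemma near_right (hy : ∀ᵐ x : ℝ, Fsl S L y x = 1) {l : ℝ × Ed n}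
    (hl : l ∈ L) (hlS : y - l.2 ∈ S) {ε : ℝ} (hε : 0 < ε) :
    ∃ m ∈ L, y - m.2 ∈ S ∧ l.1 + 1 ≤ m.1 ∧ m.1 < l.1 + 1 + ε := by
  obtain ⟨x, hx, m, hm1, hm2⟩ := Fsl_cover hy (show l.1 + 1/2 < l.1 + 1/2 + ε by linarith)
  rw [Set.mem_Icc] at hm1
  rw [Set.mem_Ioo] at hx
  have hmL := m.2
  have hne : (m : ℝ × Ed n) ≠ l := by
    intro h
    rw [h] at hm1
    linarith [hm1.2, hx.1]
  have hsep := Fsl_sep hy hmL hl hm2 hlS hne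
  have hgt : l.1 < (m : ℝ × Ed n).1 := by linarith [hm1.2, hx.1]
  rw [_root_.abs_of_pos (by linarith)] at hsep
  exact ⟨m, hmL, hm2, by linarith, by linarith [hm1.1, hx.2]⟩

private lemma near_left (hy : ∀ᵐ x : ℝ, Fsl S L y x = 1) {l : ℝ × Ed n}
    (hl : l ∈ L) (hlS : y - l.2 ∈ S) {ε : ℝ} (hε : 0 < ε) :
    ∃ m ∈ L, y - m.2 ∈ S ∧ m.1 ≤ l.1 - 1 ∧ l.1 - 1 - ε < m.1 := by
  obtain ⟨x, hx, m, hm1, hm2⟩ := Fsl_cover hy (show l.1 - 1/2 - ε < l.1 - 1/2 by linarith)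
  rw [Set.mem_Icc] at hm1
  rw [Set.mem_Ioo] at hx
  have hmL := m.2
  have hne : (m : ℝ × Ed n) ≠ l := by
    intro h
    rw [h] at hm1
    linarith [hm1.1, hx.2]
  have hsep := Fsl_sep hy hl hmL hlS hm2 (Ne.symm hne)
  have hgt : (m : ℝ × Ed n).1 < l.1 := by linarith [hm1.1, hx.2]
  rw [_root_.abs_of_pos (by linarith)] at hsep
  exact ⟨m, hmL, hm2, by linarith, by linarith [hm1.2, hx.1]⟩

private lemma exists_succ (hy : ∀ᵐ x : ℝ, Fsl S L y x = 1) {l : ℝ × Ed n}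
    (hl : l ∈ L) (hlS : y - l.2 ∈ S) :
    ∃ m ∈ L, y - m.2 ∈ S ∧ m.1 = l.1 + 1 := by
  obtain ⟨m, hm, hmS, h1, h2⟩ := near_right hy hl hlS (by norm_num : (0:ℝ) < 1/2)
  rcases eq_or_lt_of_le h1 with heq | hlt
  · exact ⟨m, hm, hmS, heq.symm⟩
  · exfalso
    obtain ⟨m', hm', hm'S, h1', h2'⟩ := near_right hy hl hlS (show 0 < m.1 - (l.1 + 1) by linarith)
    have hne : m' ≠ m := by
      intro h
      rw [h] at h2'
      linarith
    have hsep := Fsl_sep hy hm' hm hm'S hmS hne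
    have hlt2 : |m'.1 - m.1| < 1 := by
      rw [abs_lt]
      constructor <;> linarith
    exact absurd hsep (not_le.mpr hlt2)

private lemma exists_pred (hy : ∀ᵐ x : ℝ, Fsl S L y x = 1) {l : ℝ × Ed n}
    (hl : l ∈ L) (hlS : y - l.2 ∈ S) :
    ∃ m ∈ L, y - m.2 ∈ S ∧ m.1 = l.1 - 1 := by
  obtain ⟨m, hm, hmS, h1, h2⟩ := near_left hy hl hlS (by norm_num : (0:ℝ) < 1/2)
  rcases eq_or_lt_of_le h1 with heq | hlt
  · exact ⟨m, hm, hmS, heq⟩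
  · exfalso
    obtain ⟨m', hm', hm'S, h1', h2'⟩ := near_left hy hl hlS (show 0 < (l.1 - 1) - m.1 by linarith)
    have hne : m' ≠ m := by
      intro h
      rw [h] at h2'
      linarith
    have hsep := Fsl_sep hy hm' hm hm'S hmS hne
    have hlt2 : |m'.1 - m.1| < 1 := by
      rw [abs_lt]
      constructor <;> linarith
    exact absurd hsep (not_le.mpr hlt2)

private lemma exists_shift (hy : ∀ᵐ x : ℝ, Fsl S L y x = 1) (k : ℤ) :
    ∀ {l : ℝ × Ed n}, l ∈ L → y - l.2 ∈ S →
      ∃ m ∈ L, y - m.2 ∈ S ∧ m.1 = l.1 + (k : ℝ) := by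
  induction k using Int.induction_on with
  | zero =>
    intro l hl hlS
    exact ⟨l, hl, hlS, by norm_num⟩
  | succ i ih =>
    intro l hl hlS
    obtain ⟨m, hm, hmS, hco⟩ := ih hl hlS
    obtain ⟨m', hm', hm'S, hco'⟩ := exists_succ hy hm hmS
    refine ⟨m', hm', hm'S, ?_⟩
    rw [hco', hco]
    push_cast
    ring
  | pred i ih =>
    intro l hl hlS
    obtain ⟨m, hm, hmS, hco⟩ := ih hl hlS
    obtain ⟨m', hm', hm'S, hco'⟩ := exists_pred hy hm hmS
    refine ⟨m', hm', hm'S, ?_⟩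
    rw [hco', hco]
    push_cast
    ring

private lemma congr_mod (hy : ∀ᵐ x : ℝ, Fsl S L y x = 1) {l m : ℝ × Ed n}
    (hl : l ∈ L) (hm : m ∈ L) (hlS : y - l.2 ∈ S) (hmS : y - m.2 ∈ S) :
    ∃ k : ℤ, l.1 - m.1 = (k : ℝ) := by
  obtain ⟨m', hm', hm'S, hco⟩ := exists_shift hy ⌊l.1 - m.1⌋ hm hmS
  by_cases h : m' = l
  · rw [h] at hco
    exact ⟨⌊l.1 - m.1⌋, by linarith⟩
  · exfalso
    have hsep := Fsl_sep hy hl hm' hlS hm'S (Ne.symm h)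
    have h1 : l.1 - m'.1 = Int.fract (l.1 - m.1) := by
      rw [hco, Int.fract]
      ring
    have h2 := Int.fract_nonneg (l.1 - m.1)
    have h3 := Int.fract_lt_one (l.1 - m.1)
    rw [h1, _root_.abs_of_nonneg h2] at hsep
    linarith


private lemma alphaT_snd {n : ℕ} (t : ℝ) (l : ℝ × Ed n) : (alphaT t l).2 = l.2 := by
  unfold alphaT
  split <;> rfl

theorem stmt15 {n : ℕ} (S : Set (Ed n)) (hB : Bornology.IsBounded S)
    (hM : MeasurableSet S) (hpos : 0 < volume S) (t : ℝ) (L : Set (ℝ × Ed n))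
    (htile : IsTiling
      (Set.indicator ((Set.Icc (-(1/2) : ℝ) (1/2)) ×ˢ S) (fun _ => (1 : ℝ))) L) :
    Set.InjOn (alphaT t) L ∧
    IsTiling
      (Set.indicator ((Set.Icc (-(1/2) : ℝ) (1/2)) ×ˢ S) (fun _ => (1 : ℝ)))
      (alphaT t '' L) := by
  classical
  haveI : (volume : Measure (ℝ × Ed n)).IsAddLeftInvariant :=
    inferInstanceAs (((volume : Measure ℝ).prod (volume : Measure (Ed n))).IsAddLeftInvariant)
  -- termwise identity
  have hterm : ∀ (z l : ℝ × Ed n),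
      ENNReal.ofReal (Set.indicator ((Set.Icc (-(1/2) : ℝ) (1/2)) ×ˢ S) (fun _ => (1 : ℝ)) (z - l))
        = (if z.1 - l.1 ∈ Set.Icc (-(1/2) : ℝ) (1/2) ∧ z.2 - l.2 ∈ S then (1 : ℝ≥0∞) else 0) := by
    intro z l
    by_cases h : z.1 - l.1 ∈ Set.Icc (-(1/2) : ℝ) (1/2) ∧ z.2 - l.2 ∈ S
    · rw [if_pos h, Set.indicator_of_mem, ENNReal.ofReal_one]
      exact Set.mem_prod.2 (by simpa [Prod.fst_sub, Prod.snd_sub] using h)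
    · rw [if_neg h, Set.indicator_of_notMem, ENNReal.ofReal_zero]
      intro hc
      exact h (by simpa [Prod.fst_sub, Prod.snd_sub] using Set.mem_prod.1 hc)
  have htile2 : ∀ᵐ z : ℝ × Ed n, ∑' l : L,
      ENNReal.ofReal (Set.indicator ((Set.Icc (-(1/2) : ℝ) (1/2)) ×ˢ S) (fun _ => (1 : ℝ))
        (z - (l : ℝ × Ed n))) = 1 := htile
  have htile' : ∀ᵐ z : ℝ × Ed n, Fsl S L z.2 z.1 = 1 := by
    filter_upwards [htile2] with z hz
    rw [← hz]
    unfold Fsl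
    exact tsum_congr fun l => (hterm z l).symm
  -- measurable null superset of the bad set
  obtain ⟨N, hNsub, hNm, hN0⟩ :=
    exists_measurable_superset_of_null (ae_iff.mp htile')
  -- a.e. slice of N is null
  have hNy : ∀ᵐ y : Ed n, (volume : Measure ℝ) ((fun x => (x, y)) ⁻¹' N) = 0 := by
    have hprod : (volume : Measure (ℝ × Ed n)) N
        = ∫⁻ y, (volume : Measure ℝ) ((fun x => (x, y)) ⁻¹' N) ∂(volume : Measure (Ed n)) := by
      rw [MeasureTheory.Measure.volume_eq_prod]
      exact Measure.prod_apply_symm hNm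
    have h0 : ∫⁻ y, (volume : Measure ℝ) ((fun x => (x, y)) ⁻¹' N) ∂(volume : Measure (Ed n))
        = 0 := by rw [← hprod]; exact hN0
    have h1 := (lintegral_eq_zero_iff (measurable_measure_prodMk_right hNm)).mp h0
    filter_upwards [h1] with y hy
    simpa using hy
  set M : Set (Ed n) := {y : Ed n | ¬ (volume : Measure ℝ) ((fun x => (x, y)) ⁻¹' N) = 0}
    with hMdef
  have hM0 : volume M = 0 := ae_iff.mp hNy
  -- slices are a.e. tilings for good y
  have hgood : ∀ y : Ed n, y ∉ M → ∀ᵐ x : ℝ, Fsl S L y x = 1 := by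
    intro y hyM
    rw [ae_iff]
    have hy0 : (volume : Measure ℝ) ((fun x => (x, y)) ⁻¹' N) = 0 := by
      by_contra hc
      exact hyM hc
    refine measure_mono_null ?_ hy0
    intro x hx
    exact hNsub hx
  -- dichotomy
  have hdich : ∀ y : Ed n, y ∉ M →
      (∀ l, l ∈ L → y - l.2 ∈ S → ∃ k : ℤ, l.1 = (k : ℝ)) ∨
      (∀ l, l ∈ L → y - l.2 ∈ S → ¬ ∃ k : ℤ, l.1 = (k : ℝ)) := by
    intro y hyM
    by_cases hc : ∃ l, l ∈ L ∧ y - l.2 ∈ S ∧ ∃ k : ℤ, l.1 = (k : ℝ)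
    · left
      obtain ⟨l0, hl0, hl0S, k0, hk0⟩ := hc
      intro m hm hmS
      obtain ⟨k, hk⟩ := congr_mod (hgood y hyM) hm hl0 hmS hl0S
      exact ⟨k + k0, by push_cast; linarith⟩
    · right
      intro m hm hmS hex
      exact hc ⟨m, hm, hmS, hex⟩
  -- existence of good y hitting a given fiber
  have hexy : ∀ a : Ed n, ∃ y : Ed n, y ∉ M ∧ y - a ∈ S := by
    intro a
    have hA : volume ((fun y : Ed n => y - a) ⁻¹' S) = volume S := by
      have h : ((fun y : Ed n => y - a) ⁻¹' S) = (fun y : Ed n => -a + y) ⁻¹' S := by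
        ext u
        simp [sub_eq_neg_add, add_comm]
      rw [h, measure_preimage_add]
    by_contra hcon
    push_neg at hcon
    have hsub : ((fun y : Ed n => y - a) ⁻¹' S) ⊆ M := by
      intro u hu
      by_contra huM
      exact hcon u huM hu
    have h0 := measure_mono_null hsub hM0
    rw [hA] at h0
    exact absurd h0 (ne_of_gt hpos)
  -- injectivity
  have hinj : Set.InjOn (alphaT t) L := by
    intro l hl m hm heq
    unfold alphaT at heq
    by_cases h1 : ∃ k : ℤ, l.1 = (k : ℝ) <;> by_cases h2 : ∃ k : ℤ, m.1 = (k : ℝ)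
    · rwa [if_pos h1, if_pos h2] at heq
    · exfalso
      rw [if_pos h1, if_neg h2] at heq
      have hl2 : l.2 = m.2 := by rw [heq]
      obtain ⟨y, hyM, hyS⟩ := hexy l.2
      have hmS : y - m.2 ∈ S := by rwa [hl2] at hyS
      obtain ⟨k, hk⟩ := congr_mod (hgood y hyM) hl hm hyS hmS
      obtain ⟨k0, hk0⟩ := h1
      exact h2 ⟨k0 - k, by push_cast; linarith⟩
    · exfalso
      rw [if_neg h1, if_pos h2] at heq
      have hl2 : l.2 = m.2 := by rw [← heq]
      obtain ⟨y, hyM, hyS⟩ := hexy l.2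
      have hmS : y - m.2 ∈ S := by rwa [hl2] at hyS
      obtain ⟨k, hk⟩ := congr_mod (hgood y hyM) hl hm hyS hmS
      obtain ⟨k0, hk0⟩ := h2
      exact h1 ⟨k0 + k, by push_cast; linarith⟩
    · rw [if_neg h1, if_neg h2] at heq
      have h1' := congrArg Prod.fst heq
      have h2' := congrArg Prod.snd heq
      simp only at h1' h2'
      exact Prod.ext (by linarith) h2'
  refine ⟨hinj, ?_⟩
  -- the shifted null set
  set N' : Set (ℝ × Ed n) := (fun z : ℝ × Ed n => z - ((t, 0) : ℝ × Ed n)) ⁻¹' N with hN'def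
  have hN'0 : volume N' = 0 := by
    have h : N' = (fun z : ℝ × Ed n => -((t, (0 : Ed n))) + z) ⁻¹' N := by
      ext z
      simp [hN'def, sub_eq_neg_add, add_comm]
    rw [h, measure_preimage_add]
    exact hN0
  have hM2 : volume {z : ℝ × Ed n | z.2 ∈ M} = 0 := by
    have h : {z : ℝ × Ed n | z.2 ∈ M} = Set.univ ×ˢ M := by
      ext z
      simp
    rw [h, MeasureTheory.Measure.volume_eq_prod, Measure.prod_prod, hM0, mul_zero]
  have hae : ∀ᵐ z : ℝ × Ed n, z ∉ N ∧ z ∉ N' ∧ z.2 ∉ M := by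
    have h1 : ∀ᵐ z : ℝ × Ed n, z ∉ N := measure_eq_zero_iff_ae_notMem.mp hN0
    have h2 : ∀ᵐ z : ℝ × Ed n, z ∉ N' := measure_eq_zero_iff_ae_notMem.mp hN'0
    have h3 : ∀ᵐ z : ℝ × Ed n, z ∉ {z : ℝ × Ed n | z.2 ∈ M} := measure_eq_zero_iff_ae_notMem.mp hM2
    filter_upwards [h1, h2, h3] with z hz1 hz2 hz3
    exact ⟨hz1, hz2, hz3⟩
  unfold IsTiling
  filter_upwards [hae] with z hz
  obtain ⟨hzN, hzN', hzM⟩ := hz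
  rw [← Equiv.tsum_eq (Equiv.Set.imageOfInjOn (alphaT t) L hinj)
    (fun m : ↥(alphaT t '' L) => ENNReal.ofReal
      (Set.indicator ((Set.Icc (-(1/2) : ℝ) (1/2)) ×ˢ S) (fun _ => (1 : ℝ))
        (z - (m : ℝ × Ed n))))]
  have hcoe : ∀ l : L, ((Equiv.Set.imageOfInjOn (alphaT t) L hinj) l : ℝ × Ed n)
      = alphaT t (l : ℝ × Ed n) := fun l => rfl
  rcases hdich z.2 hzM with hall | hnone
  · have hFz : Fsl S L z.2 z.1 = 1 := by
      by_contra hcon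
      exact hzN (hNsub hcon)
    rw [← hFz]
    unfold Fsl
    apply tsum_congr
    intro l
    rw [hcoe l, hterm z (alphaT t (l : ℝ × Ed n))]
    by_cases hS : z.2 - (l : ℝ × Ed n).2 ∈ S
    · have hfix : alphaT t (l : ℝ × Ed n) = (l : ℝ × Ed n) := by
        unfold alphaT
        rw [if_pos (hall _ l.2 hS)]
      rw [hfix]
    · rw [if_neg, if_neg]
      · exact fun hc => hS hc.2
      · intro hc
        obtain ⟨hc1, hc2⟩ := hc
        rw [alphaT_snd] at hc2
        exact hS hc2
  · have hFz : Fsl S L z.2 (z.1 - t) = 1 := by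
      by_contra hcon
      apply hzN'
      show z - ((t, 0) : ℝ × Ed n) ∈ N
      apply hNsub
      show ¬ Fsl S L (z - ((t, 0) : ℝ × Ed n)).2 (z - ((t, 0) : ℝ × Ed n)).1 = 1
      have hz2 : (z - ((t, 0) : ℝ × Ed n)).2 = z.2 := by
        simp [Prod.snd_sub]
      have hz1 : (z - ((t, 0) : ℝ × Ed n)).1 = z.1 - t := by
        simp [Prod.fst_sub]
      rw [hz1, hz2]
      exact hcon
    rw [← hFz]
    unfold Fsl
    apply tsum_congr
    intro l
    rw [hcoe l, hterm z (alphaT t (l : ℝ × Ed n))]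
    by_cases hS : z.2 - (l : ℝ × Ed n).2 ∈ S
    · have hsh : alphaT t (l : ℝ × Ed n) = ((l : ℝ × Ed n).1 + t, (l : ℝ × Ed n).2) := by
        unfold alphaT
        rw [if_neg (hnone _ l.2 hS)]
      rw [hsh]
      have harith : z.1 - ((l : ℝ × Ed n).1 + t) = z.1 - t - (l : ℝ × Ed n).1 := by ring
      simp only [harith]
    · rw [if_neg, if_neg]
      · exact fun hc => hS hc.2
      · intro hc
        obtain ⟨hc1, hc2⟩ := hc
        rw [alphaT_snd] at hc2
        exact hS hc2
end
end

section
/- Let Ω = [−1/2, 1/2] × Σ ⊂ ℝ × ℝ^{d−1} with Σ bounded measurable of positive measure. If Ω admits a spectrum Λ contained in ℤ × ℝ^{d−1}, then for each k ∈ ℤ, the set Γ_k := {γ ∈ ℝ^{d−1} : (k, γ) ∈ Λ} is a spectrum for Σ. -/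
open MeasureTheory Complex Set
open scoped Pointwise ENNReal RealInnerProductSpace

noncomputable section

/-- Auxiliary: the unit exponential `e(a) = exp(2πia)`. -/
def eI (a : ℝ) : ℂ := Complex.exp (2 * Real.pi * Complex.I * (a : ℂ))

lemma eI_mul_conj (a b : ℝ) : eI a * (starRingEnd ℂ) (eI b) = eI (a - b) := by
  unfold eI
  rw [← Complex.exp_conj, ← Complex.exp_add]
  congr 1
  simp only [map_mul, Complex.conj_I, Complex.conj_ofReal, map_ofNat]
  push_cast
  ring

lemma norm_eI (a : ℝ) : ‖eI a‖ = 1 := by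
  unfold eI
  rw [show (2 * Real.pi * Complex.I * (a : ℂ)) = ((2 * Real.pi * a : ℝ) : ℂ) * Complex.I by
    push_cast; ring, Complex.norm_exp_ofReal_mul_I]

lemma int_eI (j : ℤ) :
    ∫ t in Set.Icc (-(1/2) : ℝ) (1/2), eI ((j : ℝ) * t) = if j = 0 then 1 else 0 := by
  rcases eq_or_ne j 0 with h | h
  · simp only [h, if_true, Int.cast_zero, zero_mul]
    have : eI 0 = 1 := by simp [eI]
    rw [this]
    simp [Real.volume_Icc]
    norm_num
  · rw [if_neg h]
    have hc : (2 * Real.pi * Complex.I * (j : ℂ)) ≠ 0 := by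
      simp [Real.pi_ne_zero, Complex.I_ne_zero, h]
    have hint : ∀ t : ℝ, eI ((j : ℝ) * t) =
        Complex.exp ((2 * Real.pi * Complex.I * (j : ℂ)) * (t : ℂ)) := by
      intro t; unfold eI; congr 1; push_cast; ring
    simp_rw [hint]
    rw [MeasureTheory.integral_Icc_eq_integral_Ioc,
      ← intervalIntegral.integral_of_le (by norm_num : (-(1/2) : ℝ) ≤ 1/2),
      integral_exp_mul_complex hc]
    have h1 : (2 * Real.pi * Complex.I * (j : ℂ)) * ((1/2 : ℝ) : ℂ) =
        (2 * Real.pi * Complex.I * (j : ℂ)) * ((-(1/2) : ℝ) : ℂ) + (j : ℂ) * (2 * Real.pi * Complex.I) := by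
      push_cast; ring
    rw [h1, Complex.exp_add, Complex.exp_int_mul_two_pi_mul_I, mul_one, sub_self, zero_div]

theorem stmt16 {n : ℕ} (S : Set (Ed n)) (hB : Bornology.IsBounded S)
    (hM : MeasurableSet S) (hpos : 0 < volume S) (L : Set (ℝ × Ed n))
    (hspec : IsSpectrumP ((Set.Icc (-(1/2) : ℝ) (1/2)) ×ˢ S) L)
    (hZ : ∀ l ∈ L, ∃ k : ℤ, l.1 = (k : ℝ)) :
    ∀ k : ℤ, IsSpectrum S {γ : Ed n | ((k : ℝ), γ) ∈ L} := by
  intro k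
  set I : Set ℝ := Set.Icc (-(1/2) : ℝ) (1/2) with hI
  have hrestrict : volume.restrict (I ×ˢ S) = (volume.restrict I).prod (volume.restrict S) := by
    rw [MeasureTheory.Measure.volume_eq_prod, ← Measure.prod_restrict]
  have hIvol : volume I = 1 := by rw [hI, Real.volume_Icc]; norm_num
  have expP_eq : ∀ (l z : ℝ × Ed n), expP l z = eI (l.1 * z.1) * eI (inner ℝ l.2 z.2) := by
    intro l z
    unfold expP eI
    rw [← Complex.exp_add]
    congr 1
    push_cast
    ring
  have expF_eq : ∀ (l x : Ed n), expF l x = eI (inner ℝ l x) := fun l x => rfl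
  have hone : ∫ t in I, (1 : ℂ) = 1 := by
    rw [MeasureTheory.setIntegral_const, measureReal_def, hIvol]
    simp
  constructor
  · -- orthogonality
    intro γ hγ γ' hγ' hne
    have hne2 : ((k : ℝ), γ) ≠ ((k : ℝ), γ') := fun h => hne (congrArg Prod.snd h)
    have h0 := hspec.1 ((k : ℝ), γ) hγ ((k : ℝ), γ') hγ' hne2
    have heq : ∀ z : ℝ × Ed n,
        expP ((k : ℝ), γ) z * (starRingEnd ℂ) (expP ((k : ℝ), γ') z) =
        (fun t : ℝ => (1 : ℂ)) z.1 * (fun x => expF γ x * (starRingEnd ℂ) (expF γ' x)) z.2 := by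
      intro z
      rw [expP_eq, expP_eq, map_mul, mul_mul_mul_comm, eI_mul_conj, sub_self]
      simp only [expF_eq]
      have : eI 0 = 1 := by simp [eI]
      rw [this, one_mul]
    calc ∫ x in S, expF γ x * (starRingEnd ℂ) (expF γ' x)
        = (∫ t in I, (1 : ℂ)) * ∫ x in S, expF γ x * (starRingEnd ℂ) (expF γ' x) := by
          rw [hone, one_mul]
      _ = ∫ z in I ×ˢ S, expP ((k : ℝ), γ) z * (starRingEnd ℂ) (expP ((k : ℝ), γ') z) := by
          rw [show (∫ z in I ×ˢ S, expP ((k : ℝ), γ) z * (starRingEnd ℂ) (expP ((k : ℝ), γ') z))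
              = ∫ z in I ×ˢ S, (fun t : ℝ => (1 : ℂ)) z.1 *
                (fun x => expF γ x * (starRingEnd ℂ) (expF γ' x)) z.2 from
            MeasureTheory.integral_congr_ae (Filter.Eventually.of_forall fun z => heq z),
            MeasureTheory.Measure.volume_eq_prod]
          exact (MeasureTheory.setIntegral_prod_mul (fun _ : ℝ => (1 : ℂ))
            (fun x => expF γ x * (starRingEnd ℂ) (expF γ' x)) I S).symm
      _ = 0 := h0
  · -- completeness
    intro f hf hf0
    set F : ℝ × Ed n → ℂ := fun z => eI ((k : ℝ) * z.1) * f z.2 with hF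
    have hmp : MeasurePreserving (Prod.snd : ℝ × Ed n → Ed n)
        ((volume.restrict I).prod (volume.restrict S)) (volume.restrict S) := by
      refine ⟨measurable_snd, ?_⟩
      rw [Measure.map_snd_prod]
      rw [Measure.restrict_apply_univ, hIvol, one_smul]
    have h1 : MemLp (fun z : ℝ × Ed n => f z.2) 2
        ((volume.restrict I).prod (volume.restrict S)) :=
      hf.comp_measurePreserving hmp
    have hcont : Continuous (fun z : ℝ × Ed n => eI ((k : ℝ) * z.1)) := by
      unfold eI
      exact Complex.continuous_exp.comp (continuous_const.mul
        (Complex.continuous_ofReal.comp (continuous_const.mul continuous_fst)))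
    have hFmeas : AEStronglyMeasurable F ((volume.restrict I).prod (volume.restrict S)) :=
      hcont.aestronglyMeasurable.mul h1.aestronglyMeasurable
    have hFmem : MemLp F 2 (volume.restrict (I ×ˢ S)) := by
      rw [hrestrict]
      refine MemLp.of_le h1 hFmeas (Filter.Eventually.of_forall fun z => ?_)
      rw [hF]
      simp only [norm_mul, norm_eI, one_mul]
      exact le_refl _
    have hF0 : ∀ l ∈ L, ∫ z in I ×ˢ S, F z * (starRingEnd ℂ) (expP l z) = 0 := by
      intro l hl
      obtain ⟨m, hm⟩ := hZ l hl
      have heq : ∀ z : ℝ × Ed n, F z * (starRingEnd ℂ) (expP l z) =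
          (fun t : ℝ => eI (((k - m : ℤ) : ℝ) * t)) z.1 *
          (fun x => f x * (starRingEnd ℂ) (expF l.2 x)) z.2 := by
        intro z
        rw [hF]
        simp only
        rw [expP_eq, map_mul, mul_mul_mul_comm, eI_mul_conj, expF_eq, hm]
        congr 2
        push_cast
        ring
      have : ∫ z in I ×ˢ S, F z * (starRingEnd ℂ) (expP l z) =
          (∫ t in I, eI (((k - m : ℤ) : ℝ) * t)) *
          ∫ x in S, f x * (starRingEnd ℂ) (expF l.2 x) := by
        rw [show (∫ z in I ×ˢ S, F z * (starRingEnd ℂ) (expP l z)) =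
            ∫ z in I ×ˢ S, (fun t : ℝ => eI (((k - m : ℤ) : ℝ) * t)) z.1 *
              (fun x => f x * (starRingEnd ℂ) (expF l.2 x)) z.2 from
          MeasureTheory.integral_congr_ae (Filter.Eventually.of_forall fun z => heq z),
          MeasureTheory.Measure.volume_eq_prod]
        exact MeasureTheory.setIntegral_prod_mul (fun t : ℝ => eI (((k - m : ℤ) : ℝ) * t))
          (fun x => f x * (starRingEnd ℂ) (expF l.2 x)) I S
      rw [this, int_eI]
      rcases eq_or_ne (k - m) 0 with h | h
      · have hmk : (m : ℝ) = (k : ℝ) := by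
          have : m = k := by omega
          exact_mod_cast this
        have hlmem : ((k : ℝ), l.2) ∈ L := by
          rw [← hmk, ← hm]
          exact hl
        rw [if_pos h, one_mul]
        exact hf0 l.2 hlmem
      · rw [if_neg h, zero_mul]
    have hFz := hspec.2 F hFmem hF0
    rw [Filter.eventuallyEq_iff_exists_mem] at hFz
    have hFz' : ∀ᵐ z ∂((volume.restrict I).prod (volume.restrict S)), F z = 0 := by
      rw [← hrestrict]
      filter_upwards [hspec.2 F hFmem hF0] with z hz using hz
    have h2 := Measure.ae_ae_of_ae_prod hFz'
    haveI : (MeasureTheory.ae (volume.restrict I)).NeBot := by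
      rw [MeasureTheory.ae_neBot]
      intro hcon
      have := congrArg (fun μ => μ Set.univ) hcon
      simp only [Measure.restrict_apply_univ, hIvol] at this
      simp at this
    obtain ⟨t, ht⟩ := h2.exists
    filter_upwards [ht] with x hx
    have hz : eI ((k : ℝ) * t) ≠ 0 := Complex.exp_ne_zero _
    have : eI ((k : ℝ) * t) * f x = 0 := hx
    simp only [Pi.zero_apply]
    exact (mul_eq_zero.mp this).resolve_left hz
end
end

section
/- Let Ω = [−1/2, 1/2] × Σ ⊂ ℝ × ℝ^{d−1} with Σ bounded measurable of positive measure, and suppose Ω + Λ is a tiling with Λ ⊆ ℤ × ℝ^{d−1}. Then for each k ∈ ℤ, the set Γ_k := {γ ∈ ℝ^{d−1} : (k, γ) ∈ Λ} satisfies that Σ + Γ_k is a tiling of ℝ^{d−1}. -/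
open MeasureTheory Complex Set
open scoped Pointwise ENNReal RealInnerProductSpace

noncomputable section

theorem stmt17 {n : ℕ} (S : Set (Ed n)) (hB : Bornology.IsBounded S)
    (hM : MeasurableSet S) (hpos : 0 < volume S) (L : Set (ℝ × Ed n))
    (htile : IsTiling
      (Set.indicator ((Set.Icc (-(1/2) : ℝ) (1/2)) ×ˢ S) (fun _ => (1 : ℝ))) L)
    (hZ : ∀ l ∈ L, ∃ k : ℤ, l.1 = (k : ℝ)) :
    ∀ k : ℤ, IsTiling (Set.indicator S (fun _ => (1 : ℝ)))
      {γ : Ed n | ((k : ℝ), γ) ∈ L} := by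
  intro k
  have hae : ∀ᵐ t : ℝ, ∀ᵐ y : Ed n,
      ∑' l : L, ENNReal.ofReal
        ((Set.indicator ((Set.Icc (-(1/2) : ℝ) (1/2)) ×ˢ S) (fun _ => (1 : ℝ)))
          ((t, y) - (l : ℝ × Ed n))) = 1 :=
    Measure.ae_ae_of_ae_prod htile
  have hres : ∀ᵐ t ∂(volume.restrict (Set.Ioo ((k:ℝ) - 1/2) ((k:ℝ) + 1/2))),
      t ∈ Set.Ioo ((k:ℝ) - 1/2) ((k:ℝ) + 1/2) ∧ (∀ᵐ y : Ed n,
      ∑' l : L, ENNReal.ofReal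
        ((Set.indicator ((Set.Icc (-(1/2) : ℝ) (1/2)) ×ˢ S) (fun _ => (1 : ℝ)))
          ((t, y) - (l : ℝ × Ed n))) = 1) :=
    (ae_restrict_mem measurableSet_Ioo).and (ae_restrict_of_ae hae)
  have hne : (volume.restrict (Set.Ioo ((k:ℝ) - 1/2) ((k:ℝ) + 1/2))) ≠ 0 := by
    rw [Ne, Measure.restrict_eq_zero, Real.volume_Ioo]
    intro h
    simp only [ENNReal.ofReal_eq_zero] at h
    linarith
  have : (ae (volume.restrict (Set.Ioo ((k:ℝ) - 1/2) ((k:ℝ) + 1/2)))).NeBot :=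
    ae_neBot.2 hne
  obtain ⟨t, ht, htP⟩ := hres.exists
  filter_upwards [htP] with y hy
  rw [← hy]
  set g : L → ℝ≥0∞ := fun l => ENNReal.ofReal
        ((Set.indicator ((Set.Icc (-(1/2) : ℝ) (1/2)) ×ˢ S) (fun _ => (1 : ℝ)))
          ((t, y) - (l : ℝ × Ed n))) with hg
  have hk : ((k:ℝ), y) ∈ (Set.univ : Set (ℝ × Ed n)) := trivial
  set i : {γ : Ed n // γ ∈ {γ : Ed n | ((k : ℝ), γ) ∈ L}} → L :=
    fun γ => ⟨((k : ℝ), γ.1), γ.2⟩ with hi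
  have hinj : Function.Injective i := by
    intro a b hab
    apply Subtype.ext
    have := congrArg (fun l : L => (l : ℝ × Ed n).2) hab
    simpa using this
  have htk : |t - (k:ℝ)| < 1/2 := by
    rw [abs_lt]; constructor <;> [linarith [ht.1]; linarith [ht.2]]
  have hsupp : Function.support g ⊆ Set.range i := by
    intro l hl
    have hne0 : g l ≠ 0 := hl
    obtain ⟨m, hm⟩ := hZ l l.2
    -- show the indicator is nonzero forces membership
    have hmem : ((t, y) - (l : ℝ × Ed n)) ∈ ((Set.Icc (-(1/2) : ℝ) (1/2)) ×ˢ S) := by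
      by_contra hmem
      apply hne0
      show ENNReal.ofReal ((Set.indicator ((Set.Icc (-(1/2) : ℝ) (1/2)) ×ˢ S)
        (fun _ => (1 : ℝ))) ((t, y) - (l : ℝ × Ed n))) = 0
      rw [Set.indicator_of_notMem hmem, ENNReal.ofReal_zero]
    have h1 : t - (l : ℝ × Ed n).1 ∈ Set.Icc (-(1/2) : ℝ) (1/2) := hmem.1
    -- deduce m = k
    have hmk : m = k := by
      have h1' : -(1/2 : ℝ) ≤ t - m ∧ t - m ≤ 1/2 := by
        rw [hm] at h1; exact ⟨h1.1, h1.2⟩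
      have hlt : (m : ℝ) < k + 1 := by linarith [ht.2, h1'.1]
      have hgt : (k : ℝ) - 1 < m := by linarith [ht.1, h1'.2]
      have : m < k + 1 := by exact_mod_cast hlt
      have : k - 1 < m := by exact_mod_cast hgt
      omega
    refine ⟨⟨(l : ℝ × Ed n).2, ?_⟩, ?_⟩
    · have : ((k:ℝ), (l : ℝ × Ed n).2) = (l : ℝ × Ed n) := by
        rw [hmk] at hm
        exact Prod.ext hm.symm rfl
      show ((k:ℝ), (l : ℝ × Ed n).2) ∈ L
      rw [this]; exact l.2
    · apply Subtype.ext
      rw [hmk] at hm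
      exact (Prod.ext hm.symm rfl)
  rw [← hinj.tsum_eq hsupp]
  apply tsum_congr
  intro γ
  have hsub : ((t, y) - (i γ : ℝ × Ed n)) = (t - k, y - γ.1) := rfl
  rw [hg]
  simp only [hsub]
  have htmem : t - (k:ℝ) ∈ Set.Icc (-(1/2) : ℝ) (1/2) := by
    rw [abs_lt] at htk
    exact ⟨by linarith [htk.1], by linarith [htk.2]⟩
  by_cases hS : y - γ.1 ∈ S
  · rw [Set.indicator_of_mem hS, Set.indicator_of_mem (Set.mk_mem_prod htmem hS)]
  · rw [Set.indicator_of_notMem hS, Set.indicator_of_notMem]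
    intro hmem
    exact hS hmem.2
end
end

section
/- Let Ω = I × Σ be a cylindric set in ℝ^d (d ≥ 2), where I ⊂ ℝ is a bounded interval of positive length and Σ ⊂ ℝ^{d−1} is bounded measurable of positive measure. Then Ω is a spectral set in ℝ^d if and only if Σ is a spectral set in ℝ^{d−1}. -/
open MeasureTheory Complex Set
open scoped Pointwise ENNReal RealInnerProductSpace

noncomputable section

namespace S19

open Submodule
open scoped ComplexConjugate

/-- `exp(2πi τ t)` on the line. -/
def eR (τ t : ℝ) : ℂ := Complex.exp (2 * Real.pi * Complex.I * ((τ * t : ℝ) : ℂ))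

lemma eR_conj (τ t : ℝ) : (starRingEnd ℂ) (eR τ t) = eR (-τ) t := by
  rw [eR, ← Complex.exp_conj]
  congr 1
  simp only [map_mul, Complex.conj_I, Complex.conj_ofNat, Complex.conj_ofReal]
  push_cast
  ring

lemma eR_mul (τ σ t : ℝ) : eR τ t * eR σ t = eR (τ + σ) t := by
  rw [eR, eR, eR, ← Complex.exp_add]
  congr 1
  push_cast
  ring

lemma eR_ne_zero (τ t : ℝ) : eR τ t ≠ 0 := Complex.exp_ne_zero _

lemma eR_norm (τ t : ℝ) : ‖eR τ t‖ = 1 := by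
  rw [eR, Complex.norm_exp]
  norm_num [Complex.mul_re]

lemma eR_zero (t : ℝ) : eR 0 t = 1 := by simp [eR]

lemma eR_continuous (τ : ℝ) : Continuous (eR τ) := by
  unfold eR
  fun_prop


lemma expP_eq {n : ℕ} (l x : ℝ × Ed n) : expP l x = eR l.1 x.1 * expF l.2 x.2 := by
  rw [expP, eR, expF, ← Complex.exp_add]
  congr 1
  push_cast
  ring

lemma expF_conj {d : ℕ} (l x : Ed d) : (starRingEnd ℂ) (expF l x) = expF (-l) x := by
  rw [expF, ← Complex.exp_conj]
  congr 1
  simp only [map_mul, Complex.conj_I, Complex.conj_ofNat, Complex.conj_ofReal, inner_neg_left]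
  push_cast
  ring

lemma expF_mul {d : ℕ} (l m x : Ed d) : expF l x * expF m x = expF (l + m) x := by
  rw [expF, expF, expF, ← Complex.exp_add, inner_add_left]
  congr 1
  push_cast
  ring

lemma expF_mul_conj {d : ℕ} (l m x : Ed d) :
    expF l x * (starRingEnd ℂ) (expF m x) = expF (l - m) x := by
  rw [expF_conj, expF_mul, sub_eq_add_neg]

lemma expF_norm {d : ℕ} (l x : Ed d) : ‖expF l x‖ = 1 := by
  rw [expF, Complex.norm_exp]
  norm_num [Complex.mul_re]

lemma expF_continuous {d : ℕ} (l : Ed d) : Continuous (expF l) := by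
  unfold expF
  exact Continuous.cexp (by
    exact continuous_const.mul (Complex.continuous_ofReal.comp
      (Continuous.inner continuous_const continuous_id)))

lemma expP_mul_conj {n : ℕ} (l m : ℝ × Ed n) (x : ℝ × Ed n) :
    expP l x * (starRingEnd ℂ) (expP m x)
      = eR (l.1 - m.1) x.1 * expF (l.2 - m.2) x.2 := by
  rw [expP, expP, ← Complex.exp_conj, ← Complex.exp_add, eR, expF, ← Complex.exp_add]
  congr 1
  simp only [map_mul, map_add, Complex.conj_I, Complex.conj_ofNat, Complex.conj_ofReal,
    inner_sub_left]
  push_cast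
  ring


section Interval

variable {a b : ℝ} (hab : a < b) {I : Set ℝ} (hIoo : Set.Ioo a b ⊆ I) (hIcc : I ⊆ Set.Icc a b)

include hIoo hIcc in
lemma restrict_I : volume.restrict I = volume.restrict (Set.Ioc a b) := by
  apply Measure.restrict_congr_set
  rw [ae_eq_set]
  constructor
  · refine measure_mono_null (fun x hx => ?_) (measure_singleton a)
    obtain ⟨hxI, hxn⟩ := hx
    have hcc := hIcc hxI
    simp only [Set.mem_Ioc, not_and_or, not_lt, not_le] at hxn
    rcases hxn with h' | h'
    · exact le_antisymm h' hcc.1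
    · exact absurd hcc.2 (not_le.mpr h')
  · refine measure_mono_null (fun x hx => ?_) (measure_singleton b)
    obtain ⟨hxIoc, hxn⟩ := hx
    by_contra hne
    exact hxn (hIoo ⟨hxIoc.1, lt_of_le_of_ne hxIoc.2 hne⟩)

/-- The Fourier transform of the indicator of the interval. -/
def c1 (I : Set ℝ) (τ : ℝ) : ℂ := ∫ t in I, eR τ t

include hab hIoo hIcc in
lemma c1_eq_intervalIntegral (τ : ℝ) : c1 I τ = ∫ t in a..b, eR τ t := by
  rw [c1, restrict_I hIoo hIcc, intervalIntegral.integral_of_le hab.le]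

include hab hIoo hIcc in
lemma c1_zero : c1 I 0 = ((b - a : ℝ) : ℂ) := by
  rw [c1_eq_intervalIntegral hab hIoo hIcc]
  simp [eR]

include hab hIoo hIcc in
lemma c1_of_ne (τ : ℝ) (hτ : τ ≠ 0) :
    c1 I τ = (Complex.exp (2 * Real.pi * Complex.I * τ * b)
      - Complex.exp (2 * Real.pi * Complex.I * τ * a)) / (2 * Real.pi * Complex.I * τ) := by
  rw [c1_eq_intervalIntegral hab hIoo hIcc]
  have hc : (2 * Real.pi * Complex.I * τ : ℂ) ≠ 0 := by
    simp [Real.pi_ne_zero, Complex.I_ne_zero, Complex.ofReal_eq_zero, hτ]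
  have : ∀ t : ℝ, eR τ t = Complex.exp ((2 * Real.pi * Complex.I * τ) * t) := by
    intro t; rw [eR]; congr 1; push_cast; ring
  simp_rw [this]
  rw [integral_exp_mul_complex hc]

include hab hIoo hIcc in
lemma c1_ne_zero (τ : ℝ) (h : ∀ k : ℤ, τ * (b - a) ≠ k) : c1 I τ ≠ 0 := by
  have hτ : τ ≠ 0 := by
    intro h0
    exact h 0 (by simp [h0])
  rw [c1_of_ne hab hIoo hIcc τ hτ]
  have hc : (2 * Real.pi * Complex.I * τ : ℂ) ≠ 0 := by
    simp [Real.pi_ne_zero, Complex.I_ne_zero, Complex.ofReal_eq_zero, hτ]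
  rw [div_ne_zero_iff]
  refine ⟨?_, hc⟩
  rw [sub_ne_zero]
  intro heq
  rw [Complex.exp_eq_exp_iff_exists_int] at heq
  obtain ⟨k, hk⟩ := heq
  apply h k
  have : (2 * Real.pi * Complex.I) * (τ * (b - a) - k) = 0 := by
    have := hk
    push_cast at this ⊢
    linear_combination this
  have h2 : (2 * Real.pi * Complex.I : ℂ) ≠ 0 := by
    simp [Real.pi_ne_zero, Complex.I_ne_zero]
  rcases mul_eq_zero.mp this with h' | h'
  · exact absurd h' h2
  · have h'' : ((τ * (b - a) - k : ℝ) : ℂ) = 0 := by push_cast; linear_combination h'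
    have := Complex.ofReal_eq_zero.mp h''
    linarith

include hab hIoo hIcc in
lemma c1_eq_zero (τ : ℝ) (hτ : τ ≠ 0) (k : ℤ) (hk : τ * (b - a) = k) : c1 I τ = 0 := by
  rw [c1_of_ne hab hIoo hIcc τ hτ]
  rw [div_eq_zero_iff]
  left
  rw [sub_eq_zero]
  rw [Complex.exp_eq_exp_iff_exists_int]
  have hkc : ((τ:ℂ) * ((b:ℂ) - (a:ℂ))) = (k:ℂ) := by exact_mod_cast congrArg Complex.ofReal hk
  exact ⟨k, by linear_combination (2 * (Real.pi:ℂ) * Complex.I) * hkc⟩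

include hab hIoo hIcc in
lemma c1_zero_ne_zero : c1 I 0 ≠ 0 := by
  rw [c1_zero hab hIoo hIcc]
  exact_mod_cast sub_ne_zero.mpr hab.ne'

end Interval


section Prod

variable {n : ℕ} {a b : ℝ} {I : Set ℝ}
  {S : Set (Ed n)}

lemma vol_eq : (volume : Measure (ℝ × Ed n)).restrict (I ×ˢ S)
    = (volume.restrict I).prod (volume.restrict S) := by
  rw [MeasureTheory.Measure.volume_eq_prod, Measure.prod_restrict]

lemma prod_factor (φ : ℝ → ℂ) (ψ : Ed n → ℂ) :
    ∫ x in I ×ˢ S, φ x.1 * ψ x.2 = (∫ t in I, φ t) * ∫ s in S, ψ s := by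
  rw [vol_eq]
  exact integral_prod_mul φ ψ

variable (hab : a < b) (hIoo : Set.Ioo a b ⊆ I) (hIcc : I ⊆ Set.Icc a b)
  (hBS : Bornology.IsBounded S)

include hIcc in
lemma finI : IsFiniteMeasure (volume.restrict I) := by
  constructor
  rw [Measure.restrict_apply_univ]
  exact lt_of_le_of_lt (measure_mono hIcc) (by simp [Real.volume_Icc])

include hBS in
lemma finS : IsFiniteMeasure (volume.restrict S) := by
  constructor
  rw [Measure.restrict_apply_univ]
  exact hBS.measure_lt_top

include hBS in
lemma memℒp_expF (ν : Ed n) : MemLp (expF ν) 2 (volume.restrict S) := by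
  haveI := finS hBS
  exact MemLp.of_bound (expF_continuous ν).aestronglyMeasurable 1
    (Filter.Eventually.of_forall fun s => le_of_eq (expF_norm ν s))

include hIcc in
lemma memℒp_snd {u : Ed n → ℂ} (hu : MemLp u 2 (volume.restrict S)) :
    MemLp (fun x : ℝ × Ed n => u x.2) 2 ((volume.restrict I).prod (volume.restrict S)) := by
  have hIfin : volume I ≠ ∞ := by
    refine ne_of_lt (lt_of_le_of_lt (measure_mono hIcc) ?_)
    simp [Real.volume_Icc]
  have hmap : Measure.map Prod.snd ((volume.restrict I).prod (volume.restrict S))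
      = (volume I) • volume.restrict S := by
    rw [Measure.map_snd_prod, Measure.restrict_apply_univ]
  have h1 : MemLp u 2 ((volume I) • volume.restrict S) := hu.smul_measure hIfin
  rw [← hmap] at h1
  exact (memLp_map_measure_iff h1.aestronglyMeasurable measurable_snd.aemeasurable).mp h1

include hIcc in
lemma memℒp_eRu (τ : ℝ) {u : Ed n → ℂ} (hu : MemLp u 2 (volume.restrict S)) :
    MemLp (fun x : ℝ × Ed n => eR τ x.1 * u x.2) 2 (volume.restrict (I ×ˢ S)) := by
  rw [vol_eq]
  have h2 := memℒp_snd hIcc hu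
  refine ⟨(((eR_continuous τ).comp continuous_fst).aestronglyMeasurable).mul h2.1, ?_⟩
  have : eLpNorm (fun x : ℝ × Ed n => eR τ x.1 * u x.2) 2
      ((volume.restrict I).prod (volume.restrict S))
      = eLpNorm (fun x : ℝ × Ed n => u x.2) 2
        ((volume.restrict I).prod (volume.restrict S)) := by
    apply eLpNorm_congr_norm_ae
    refine Filter.Eventually.of_forall fun x => ?_
    rw [norm_mul, eR_norm, one_mul]
  rw [this]
  exact h2.2

lemma qmp_snd : Measure.QuasiMeasurePreserving (Prod.snd : ℝ × Ed n → Ed n)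
    ((volume.restrict I).prod (volume.restrict S)) (volume.restrict S) := by
  refine ⟨measurable_snd, ?_⟩
  rw [Measure.map_snd_prod]
  exact Measure.AbsolutelyContinuous.rfl.smul_left _

include hab hIoo in
lemma ae_zero_of_prod (τ : ℝ) {u : Ed n → ℂ}
    (hu : AEStronglyMeasurable u (volume.restrict S))
    (h : (fun x : ℝ × Ed n => eR τ x.1 * u x.2) =ᵐ[volume.restrict (I ×ˢ S)] 0) :
    u =ᵐ[volume.restrict S] 0 := by
  rw [vol_eq] at h
  set u' := hu.mk u with hu'def
  have hae : u =ᵐ[volume.restrict S] u' := hu.ae_eq_mk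
  have haeP : (fun x : ℝ × Ed n => u x.2) =ᵐ[(volume.restrict I).prod (volume.restrict S)]
      (fun x : ℝ × Ed n => u' x.2) := qmp_snd.ae_eq_comp hae
  have h' : (fun x : ℝ × Ed n => eR τ x.1 * u' x.2)
      =ᵐ[(volume.restrict I).prod (volume.restrict S)] 0 := by
    filter_upwards [h, haeP] with x hx1 hx2
    rw [← hx2]
    exact hx1
  have hA : MeasurableSet {s : Ed n | u' s ≠ 0} :=
    (hu.stronglyMeasurable_mk.measurable (measurableSet_singleton (0:ℂ))).compl
  have hnull : ((volume.restrict I).prod (volume.restrict S))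
      ((Set.univ : Set ℝ) ×ˢ {s : Ed n | u' s ≠ 0}) = 0 := by
    have h0 := ae_iff.mp h'
    refine measure_mono_null ?_ h0
    rintro ⟨t, s⟩ ⟨-, hs⟩
    simp only [Set.mem_setOf_eq, Pi.zero_apply]
    exact fun hc => hs (by simpa [eR_ne_zero] using mul_eq_zero.mp hc)
  rw [Measure.prod_prod] at hnull
  rcases mul_eq_zero.mp hnull with h0 | h0
  · exfalso
    rw [Measure.restrict_apply_univ] at h0
    have : volume (Set.Ioo a b) = 0 := measure_mono_null hIoo h0
    rw [Real.volume_Ioo] at this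
    simp only [ENNReal.ofReal_eq_zero] at this
    linarith
  · have : u' =ᵐ[volume.restrict S] 0 := by
      rw [Filter.EventuallyEq, ae_iff]
      simpa using h0
    exact hae.trans this

end Prod


section Hilbert

variable {n : ℕ} {S : Set (Ed n)} (hBS : Bornology.IsBounded S)

local notation "H" => Lp (α := Ed n) ℂ 2 (volume.restrict S)

/-- A general orthogonality-passing lemma: if `x` is orthogonal to every element of `s`,
then it is orthogonal to every element of the closure of the span of `s`. -/
lemma orthAll {s : Set H} {x : H} (hx : ∀ v ∈ s, (inner ℂ v x : ℂ) = 0) :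
    ∀ w ∈ (span ℂ s).topologicalClosure, (inner ℂ w x : ℂ) = 0 := by
  intro w hw
  have h1 : ∀ w ∈ span ℂ s, (inner ℂ w x : ℂ) = 0 := by
    intro w hw
    induction hw using Submodule.span_induction with
    | mem v hv => exact hx v hv
    | zero => simp
    | add u v _ _ hu hv => rw [inner_add_left, hu, hv, add_zero]
    | smul c u _ hu => rw [inner_smul_left, hu, mul_zero]
  have h2 : IsClosed {w : H | (inner ℂ w x : ℂ) = 0} :=
    isClosed_eq (Continuous.inner continuous_id continuous_const) continuous_const
  have h3 : closure ((span ℂ s : Submodule ℂ H) : Set H) ⊆ {w : H | (inner ℂ w x : ℂ) = 0} :=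
    closure_minimal h1 h2
  have : w ∈ closure ((span ℂ s : Submodule ℂ H) : Set H) := by
    rw [← Submodule.topologicalClosure_coe]
    exact hw
  exact h3 this

include hBS

/-- The exponential as an element of `L²(S)`. -/
def EE (ν : Ed n) : H := (memℒp_expF hBS ν).toLp (expF ν)

lemma inner_EE (ν : Ed n) (g : H) :
    (inner ℂ (EE hBS ν) g : ℂ) = ∫ s in S, (g : Ed n → ℂ) s * conj (expF ν s) := by
  rw [MeasureTheory.L2.inner_def]
  apply integral_congr_ae
  filter_upwards [MemLp.coeFn_toLp (memℒp_expF hBS ν)] with s hs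
  rw [RCLike.inner_apply, EE, hs, mul_comm]

lemma integral_eq_inner_EE {f : Ed n → ℂ} (hf : MemLp f 2 (volume.restrict S)) (ν : Ed n) :
    ∫ s in S, f s * conj (expF ν s) = (inner ℂ (EE hBS ν) (hf.toLp f) : ℂ) := by
  rw [inner_EE]
  apply integral_congr_ae
  filter_upwards [MemLp.coeFn_toLp hf] with s hs
  rw [hs]

end Hilbert


section Spectra

variable {n : ℕ} {a b : ℝ} {I : Set ℝ} {S : Set (Ed n)}

lemma orth_integral (l m : ℝ × Ed n) :
    ∫ x in I ×ˢ S, expP l x * (starRingEnd ℂ) (expP m x)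
      = c1 I (l.1 - m.1) * ∫ s in S, expF (l.2 - m.2) s := by
  rw [show (∫ x in I ×ˢ S, expP l x * (starRingEnd ℂ) (expP m x))
      = ∫ x in I ×ˢ S, eR (l.1 - m.1) x.1 * expF (l.2 - m.2) x.2 from
    integral_congr_ae (Filter.Eventually.of_forall fun x => expP_mul_conj l m x)]
  exact prod_factor _ _

lemma cS_integral (ν ν' : Ed n) :
    ∫ s in S, expF ν s * (starRingEnd ℂ) (expF ν' s) = ∫ s in S, expF (ν - ν') s :=
  integral_congr_ae (Filter.Eventually.of_forall fun s => expF_mul_conj ν ν' s)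

lemma test_integral (τ : ℝ) (u : Ed n → ℂ) (μ : ℝ × Ed n) :
    ∫ x in I ×ˢ S, (eR τ x.1 * u x.2) * (starRingEnd ℂ) (expP μ x)
      = c1 I (τ - μ.1) * ∫ s in S, u s * (starRingEnd ℂ) (expF μ.2 s) := by
  have hpt : ∀ x : ℝ × Ed n, (eR τ x.1 * u x.2) * (starRingEnd ℂ) (expP μ x)
      = eR (τ - μ.1) x.1 * (u x.2 * (starRingEnd ℂ) (expF μ.2 x.2)) := by
    intro x
    rw [expP_eq, map_mul, eR_conj, show τ - μ.1 = τ + -μ.1 by ring, ← eR_mul]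
    ring
  rw [show (∫ x in I ×ˢ S, (eR τ x.1 * u x.2) * (starRingEnd ℂ) (expP μ x))
      = ∫ x in I ×ˢ S, eR (τ - μ.1) x.1 * (u x.2 * (starRingEnd ℂ) (expF μ.2 x.2)) from
    integral_congr_ae (Filter.Eventually.of_forall hpt)]
  rw [c1]
  exact prod_factor (eR (τ - μ.1)) (fun s => u s * (starRingEnd ℂ) (expF μ.2 s))

lemma inner_EE_EE (hBS : Bornology.IsBounded S) (ν ν' : Ed n) :
    (inner ℂ (EE hBS ν') (EE hBS ν) : ℂ) = ∫ s in S, expF (ν - ν') s := by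
  rw [inner_EE]
  rw [show (∫ s in S, (EE hBS ν : Ed n → ℂ) s * (starRingEnd ℂ) (expF ν' s))
      = ∫ s in S, expF ν s * (starRingEnd ℂ) (expF ν' s) from ?_]
  · exact cS_integral ν ν'
  · apply integral_congr_ae
    filter_upwards [MemLp.coeFn_toLp (memℒp_expF hBS ν)] with s hs
    simp only [EE]
    rw [hs]

lemma class_eq_iff (hab : a < b) (τ τ' : ℝ) :
    ((τ : AddCircle (b - a)⁻¹) = (τ' : AddCircle (b - a)⁻¹)) ↔
      ∃ k : ℤ, (τ - τ') * (b - a) = k := by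
  have hba : b - a ≠ 0 := sub_ne_zero.mpr hab.ne'
  rw [show ((τ : AddCircle (b - a)⁻¹) = (τ' : AddCircle (b - a)⁻¹)) ↔
      τ - τ' ∈ AddSubgroup.zmultiples (b - a)⁻¹ from QuotientAddGroup.eq_iff_sub_mem]
  constructor
  · intro h
    rw [AddSubgroup.mem_zmultiples_iff] at h
    obtain ⟨k, hk⟩ := h
    refine ⟨k, ?_⟩
    rw [zsmul_eq_mul] at hk
    field_simp at hk
    linarith [hk]
  · rintro ⟨k, hk⟩
    rw [AddSubgroup.mem_zmultiples_iff]
    refine ⟨k, ?_⟩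
    rw [zsmul_eq_mul]
    field_simp
    linarith [hk]

end Spectra

theorem forward {n : ℕ} {a b : ℝ} (hab : a < b) {I : Set ℝ} (hIoo : Set.Ioo a b ⊆ I)
    (hIcc : I ⊆ Set.Icc a b) {S : Set (Ed n)} (hBS : Bornology.IsBounded S)
    {L : Set (ℝ × Ed n)} (hL : IsSpectrumP (I ×ˢ S) L) :
    ∃ G : Set (Ed n), IsSpectrum S G := by
  classical
  obtain ⟨hOrth, hComp⟩ := hL
  have pair_fact : ∀ p ∈ L, ∀ q ∈ L, p ≠ q → c1 I (p.1 - q.1) ≠ 0 →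
      ∫ s in S, expF (p.2 - q.2) s = 0 := by
    intro p hp q hq hne hc
    have h0 := hOrth p hp q hq hne
    rw [orth_integral] at h0
    exact (mul_eq_zero.mp h0).resolve_left hc
  have pair_same : ∀ p ∈ L, ∀ q ∈ L, p ≠ q → p.1 = q.1 →
      ∫ s in S, expF (p.2 - q.2) s = 0 := by
    intro p hp q hq hne h1
    exact pair_fact p hp q hq hne
      (by rw [h1, sub_self]; exact c1_zero_ne_zero hab hIoo hIcc)
  have pair_cross : ∀ p ∈ L, ∀ q ∈ L,
      ((p.1 : AddCircle (b-a)⁻¹) ≠ (q.1 : AddCircle (b-a)⁻¹)) →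
      ∫ s in S, expF (p.2 - q.2) s = 0 := by
    intro p hp q hq hne
    have hpq : p ≠ q := fun h => hne (by rw [h])
    refine pair_fact p hp q hq hpq (c1_ne_zero hab hIoo hIcc _ ?_)
    intro k hk
    exact hne ((class_eq_iff hab _ _).mpr ⟨k, hk⟩)
  -- choice of a representative first coordinate in each class of the spectrum
  let c : AddCircle (b-a)⁻¹ → ℝ := fun q =>
    if h : ∃ p : ℝ × Ed n, p ∈ L ∧ (p.1 : AddCircle (b-a)⁻¹) = q then (h.choose).1 else 0
  have hc_spec : ∀ q (h : ∃ p : ℝ × Ed n, p ∈ L ∧ (p.1 : AddCircle (b-a)⁻¹) = q),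
      (∃ p₀ ∈ L, p₀.1 = c q) ∧ ((c q : ℝ) : AddCircle (b-a)⁻¹) = q := by
    intro q h
    have hcq : c q = (h.choose).1 := dif_pos h
    rw [hcq]
    exact ⟨⟨h.choose, h.choose_spec.1, rfl⟩, h.choose_spec.2⟩
  -- the candidate spectrum for S : union over classes of the selected exact fibers
  refine ⟨{ν : Ed n | ∃ p : ℝ × Ed n, p ∈ L ∧ p.1 = c ((p.1 : AddCircle (b-a)⁻¹)) ∧ p.2 = ν},
    ?_, ?_⟩
  · -- orthogonality
    intro ν hν ν' hν' hnu
    obtain ⟨p, hp, hpc, hp2⟩ := hν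
    obtain ⟨q, hq, hqc, hq2⟩ := hν'
    rw [cS_integral]
    subst hp2
    subst hq2
    by_cases hcl : (p.1 : AddCircle (b-a)⁻¹) = (q.1 : AddCircle (b-a)⁻¹)
    · have h1 : p.1 = q.1 := by rw [hpc, hqc, hcl]
      exact pair_same p hp q hq (fun h => hnu (by rw [h])) h1
    · exact pair_cross p hp q hq hcl
  · -- completeness
    -- Step 1 : each exponential from the projection of L lies in the closed span of the
    -- exponentials of the selected fiber of its class.
    have hEmem : ∀ p ∈ L, EE hBS p.2 ∈
        (span ℂ (EE hBS '' {ν : Ed n |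
          (c ((p.1 : AddCircle (b-a)⁻¹)), ν) ∈ L})).topologicalClosure := by
      intro p hp
      have hex : ∃ p' : ℝ × Ed n, p' ∈ L ∧
          (p'.1 : AddCircle (b-a)⁻¹) = (p.1 : AddCircle (b-a)⁻¹) := ⟨p, hp, rfl⟩
      obtain ⟨⟨p₀, hp₀L, hp₀1⟩, hQσ⟩ := hc_spec _ hex
      set σ : ℝ := c ((p.1 : AddCircle (b-a)⁻¹)) with hσdef
      set F : Set (Ed n) := {ν : Ed n | (σ, ν) ∈ L} with hFdef
      set Kq := (span ℂ (EE hBS '' F)).topologicalClosure with hKq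
      haveI : CompleteSpace Kq :=
        (span ℂ (EE hBS '' F)).isClosed_topologicalClosure.completeSpace_coe
      set w : Lp ℂ 2 (volume.restrict S) := EE hBS p.2 with hw
      set u : Lp ℂ 2 (volume.restrict S) := w - ((orthogonalProjection Kq w : Kq) :
        Lp ℂ 2 (volume.restrict S)) with hudef
      have huKq : u ∈ Kqᗮ := sub_starProjection_mem_orthogonal (K := Kq) w
      have hucm : MemLp (fun s => (u : Ed n → ℂ) s) 2 (volume.restrict S) := Lp.memLp u
      have htest : ∀ μ ∈ L,
          ∫ x in I ×ˢ S, (eR σ x.1 * (u : Ed n → ℂ) x.2) * (starRingEnd ℂ) (expP μ x) = 0 := by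
        intro μ hμ
        rw [test_integral]
        have hiu : ∫ s in S, (u : Ed n → ℂ) s * (starRingEnd ℂ) (expF μ.2 s)
            = (inner ℂ (EE hBS μ.2) u : ℂ) := (inner_EE hBS μ.2 u).symm
        by_cases hclass : (μ.1 : AddCircle (b-a)⁻¹) = (p.1 : AddCircle (b-a)⁻¹)
        · by_cases hμσ : μ.1 = σ
          · have hμF : EE hBS μ.2 ∈ Kq := by
              apply Submodule.le_topologicalClosure
              apply subset_span
              refine ⟨μ.2, ?_, rfl⟩
              rw [hFdef]
              simpa [← hμσ] using hμ
            rw [hiu, (Submodule.mem_orthogonal _ u).mp huKq _ hμF, mul_zero]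
          · obtain ⟨k, hk⟩ : ∃ k : ℤ, (σ - μ.1) * (b - a) = k := by
              apply (class_eq_iff hab σ μ.1).mp
              rw [hQσ, hclass]
            rw [c1_eq_zero hab hIoo hIcc _ (sub_ne_zero.mpr fun h => hμσ h.symm) k hk,
              zero_mul]
        · have h1 : (inner ℂ (EE hBS μ.2) w : ℂ) = 0 := by
            rw [hw, inner_EE_EE]
            exact pair_cross p hp μ hμ (fun h => hclass h.symm)
          have hgen : ∀ v ∈ EE hBS '' F, (inner ℂ v (EE hBS μ.2) : ℂ) = 0 := by
            rintro v ⟨ν, hνF, rfl⟩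
            rw [inner_EE_EE]
            exact pair_cross μ hμ (σ, ν) hνF (fun h => hclass (h.trans hQσ))
          have h2 : (inner ℂ (EE hBS μ.2)
              ((orthogonalProjection Kq w : Kq) : Lp ℂ 2 (volume.restrict S)) : ℂ) = 0 := by
            rw [← inner_conj_symm, orthAll hgen _ (SetLike.coe_mem _), map_zero]
          rw [hiu, hudef, inner_sub_right, h1, h2, sub_zero, mul_zero]
      have hFmem := memℒp_eRu hIcc σ hucm
      have hzero := hComp _ hFmem htest
      have hae0 : (fun s => (u : Ed n → ℂ) s) =ᵐ[volume.restrict S] 0 :=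
        ae_zero_of_prod hab hIoo σ hucm.1 hzero
      have hu0 : u = 0 := by
        ext1
        exact hae0.trans (Lp.coeFn_zero ℂ 2 (volume.restrict S)).symm
      have hweq : w = ((orthogonalProjection Kq w : Kq) : Lp ℂ 2 (volume.restrict S)) := by
        have := sub_eq_zero.mp (hudef ▸ hu0 : w - _ = 0)
        exact this
      rw [show (EE hBS p.2 ∈ (span ℂ (EE hBS '' F)).topologicalClosure) = (w ∈ Kq) from rfl,
        hweq]
      exact SetLike.coe_mem _
    intro f hf horthf
    have hinner : ∀ p ∈ L, (inner ℂ (EE hBS p.2) (hf.toLp f) : ℂ) = 0 := by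
      intro p hp
      have hex : ∃ p' : ℝ × Ed n, p' ∈ L ∧
          (p'.1 : AddCircle (b-a)⁻¹) = (p.1 : AddCircle (b-a)⁻¹) := ⟨p, hp, rfl⟩
      obtain ⟨-, hQσ⟩ := hc_spec _ hex
      have hgen : ∀ v ∈ EE hBS '' {ν : Ed n | (c ((p.1 : AddCircle (b-a)⁻¹)), ν) ∈ L},
          (inner ℂ v (hf.toLp f) : ℂ) = 0 := by
        rintro v ⟨ν, hν, rfl⟩
        rw [← integral_eq_inner_EE hBS hf]
        apply horthf
        exact ⟨(c ((p.1 : AddCircle (b-a)⁻¹)), ν), hν, by rw [hQσ], rfl⟩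
      exact orthAll hgen _ (hEmem p hp)
    have hFmem := memℒp_eRu hIcc 0 hf
    have htest : ∀ μ ∈ L,
        ∫ x in I ×ˢ S, (eR 0 x.1 * f x.2) * (starRingEnd ℂ) (expP μ x) = 0 := by
      intro μ hμ
      rw [test_integral, integral_eq_inner_EE hBS hf, hinner μ hμ, mul_zero]
    have hzero := hComp _ hFmem htest
    exact ae_zero_of_prod hab hIoo 0 hf.1 hzero

lemma expP_continuous {n : ℕ} (p : ℝ × Ed n) : Continuous (expP p) := by
  have : expP p = fun x : ℝ × Ed n => eR p.1 x.1 * expF p.2 x.2 := funext fun x => expP_eq p x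
  rw [this]
  exact ((eR_continuous p.1).comp continuous_fst).mul ((expF_continuous p.2).comp continuous_snd)

lemma expP_norm {n : ℕ} (p x : ℝ × Ed n) : ‖expP p x‖ = 1 := by
  rw [expP_eq, norm_mul, eR_norm, expF_norm, one_mul]

/-- Completeness of the exponentials `exp(2πi k t/(b-a))`, `k ∈ ℤ`, in `L²` of the
interval `(a, b]`. -/
lemma interval_complete {a b : ℝ} (hab : a < b) {u : ℝ → ℂ}
    (hu : MemLp u 2 (volume.restrict (Set.Ioc a b)))
    (h : ∀ k : ℤ, ∫ t in Set.Ioc a b, u t * eR (-(k / (b - a))) t = 0) :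
    u =ᵐ[volume.restrict (Set.Ioc a b)] 0 := by
  set T : ℝ := b - a with hTdef
  have hT : 0 < T := sub_pos.mpr hab
  haveI : Fact (0 < T) := ⟨hT⟩
  have hb : a + T = b := by rw [hTdef]; ring
  set u' : ℝ → ℂ := hu.1.mk u with hu'def
  have hu'm : StronglyMeasurable u' := hu.1.stronglyMeasurable_mk
  have hae : u =ᵐ[volume.restrict (Set.Ioc a b)] u' := hu.1.ae_eq_mk
  set g : AddCircle T → ℂ := AddCircle.liftIoc T a u' with hgdef
  have hg : Measurable g := by
    have : g = (fun y : Set.Ioc a (a + T) => u' y) ∘ (AddCircle.measurableEquivIoc T a) := rfl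
    rw [this]
    exact (hu'm.measurable.comp measurable_subtype_coe).comp
      (AddCircle.measurableEquivIoc T a).measurable
  have mp := AddCircle.measurePreserving_mk T a
  rw [hb] at mp
  have haeIoc : (fun x : ℝ => g x) =ᵐ[volume.restrict (Set.Ioc a b)] u := by
    filter_upwards [ae_restrict_mem measurableSet_Ioc, hae] with x hx hx2
    have hx' : x ∈ Set.Ioc a (a + T) := by rwa [hb]
    rw [hgdef]
    rw [AddCircle.liftIoc_coe_apply hx']
    exact hx2.symm
  -- `g` is in `L²` of the circle
  have h1 : MemLp (fun x : ℝ => g x) 2 (volume.restrict (Set.Ioc a b)) :=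
    hu.ae_eq haeIoc.symm
  have h2 : MemLp g 2 (volume : Measure (AddCircle T)) := by
    have hmk : AEMeasurable (fun x : ℝ => (x : AddCircle T)) (volume.restrict (Set.Ioc a b)) :=
      (AddCircle.measurable_mk').aemeasurable
    have hgsm : AEStronglyMeasurable g
        (Measure.map (fun x : ℝ => (x : AddCircle T)) (volume.restrict (Set.Ioc a b))) := by
      rw [mp.map_eq]
      exact hg.stronglyMeasurable.aestronglyMeasurable
    have := (memLp_map_measure_iff hgsm hmk).mpr h1
    rwa [mp.map_eq] at this
  have hT0 : (ENNReal.ofReal T) ≠ 0 := by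
    simp only [ne_eq, ENNReal.ofReal_eq_zero, not_le]
    exact hT
  have h3 : MemLp g 2 (AddCircle.haarAddCircle : Measure (AddCircle T)) := by
    have := h2.smul_measure (c := (ENNReal.ofReal T)⁻¹) (ENNReal.inv_ne_top.mpr hT0)
    rwa [AddCircle.volume_eq_smul_haarAddCircle, smul_smul, ENNReal.inv_mul_cancel
      hT0 ENNReal.ofReal_ne_top, one_smul] at this
  set gL := h3.toLp g with hgL
  -- all Fourier coefficients of `gL` vanish
  have hcoeff : ∀ k : ℤ, fourierCoeff (⇑gL : AddCircle T → ℂ) k = 0 := by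
    intro k
    have e1 : fourierCoeff (⇑gL : AddCircle T → ℂ) k = fourierCoeff g k := by
      apply integral_congr_ae
      filter_upwards [h3.coeFn_toLp] with x hx
      rw [hx]
    rw [e1, fourierCoeff_eq_intervalIntegral g k a]
    have e3 : (∫ x in a..(a + T), fourier (-k) (x : AddCircle T) • g (x : ℝ)) = 0 := by
      rw [hb, intervalIntegral.integral_of_le hab.le]
      rw [show (∫ x in Set.Ioc a b, fourier (-k) (x : AddCircle T) • g (x : ℝ))
          = ∫ x in Set.Ioc a b, u x * eR (-(k / T)) x from ?_, h k]
      apply integral_congr_ae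
      filter_upwards [ae_restrict_mem measurableSet_Ioc, hae] with x hx hx2
      have hx' : x ∈ Set.Ioc a (a + T) := by rwa [hb]
      rw [hgdef, AddCircle.liftIoc_coe_apply hx', fourier_coe_apply, smul_eq_mul, ← hx2,
        mul_comm]
      congr 1
      rw [eR]
      push_cast
      ring_nf
    rw [e3, smul_zero]
  -- hence `gL = 0`
  have hsum : HasSum (fun k : ℤ => fourierCoeff (⇑gL : AddCircle T → ℂ) k • fourierLp 2 k) gL :=
    hasSum_fourier_series_L2 gL
  have hzero : (fun k : ℤ => fourierCoeff (⇑gL : AddCircle T → ℂ) k • fourierLp 2 k)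
      = fun _ => (0 : Lp ℂ 2 (AddCircle.haarAddCircle : Measure (AddCircle T))) := by
    funext k
    rw [hcoeff k, zero_smul]
  rw [hzero] at hsum
  have hgL0 : gL = 0 := hsum.unique hasSum_zero
  have hgae : g =ᵐ[(AddCircle.haarAddCircle : Measure (AddCircle T))] 0 := by
    have h5 : (⇑gL : AddCircle T → ℂ) =ᵐ[(AddCircle.haarAddCircle : Measure (AddCircle T))] g :=
      h3.coeFn_toLp
    rw [hgL0] at h5
    exact h5.symm.trans (Lp.coeFn_zero ℂ 2 _)
  have hgvol : g =ᵐ[(volume : Measure (AddCircle T))] 0 := by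
    rw [AddCircle.volume_eq_smul_haarAddCircle]
    exact Measure.ae_smul_measure hgae _
  have hpull : (fun x : ℝ => g x) =ᵐ[volume.restrict (Set.Ioc a b)] (fun _ => (0:ℂ)) := by
    have := ae_eq_comp (f := fun x : ℝ => (x : AddCircle T)) (g := g) (g' := 0)
      (AddCircle.measurable_mk').aemeasurable (by rwa [mp.map_eq])
    exact this
  exact (haeIoc.symm.trans hpull)


theorem backward {n : ℕ} {a b : ℝ} (hab : a < b) {I : Set ℝ} (hIoo : Set.Ioo a b ⊆ I)
    (hIcc : I ⊆ Set.Icc a b) {S : Set (Ed n)} (hBS : Bornology.IsBounded S)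
    {G : Set (Ed n)} (hG : IsSpectrum S G) :
    ∃ L : Set (ℝ × Ed n), IsSpectrumP (I ×ˢ S) L := by
  obtain ⟨hGo, hGc⟩ := hG
  have hba : (b : ℝ) - a ≠ 0 := sub_ne_zero.mpr hab.ne'
  refine ⟨{p : ℝ × Ed n | (∃ k : ℤ, p.1 * (b - a) = k) ∧ p.2 ∈ G}, ?_, ?_⟩
  · rintro p ⟨⟨kp, hkp⟩, hpG⟩ q ⟨⟨kq, hkq⟩, hqG⟩ hne
    rw [orth_integral]
    by_cases h1 : p.1 = q.1
    · have h2 : p.2 ≠ q.2 := fun h => hne (Prod.ext h1 h)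
      have h3 := hGo p.2 hpG q.2 hqG h2
      rw [cS_integral] at h3
      rw [h3, mul_zero]
    · have hk : (p.1 - q.1) * (b - a) = ((kp - kq : ℤ) : ℝ) := by
        push_cast
        rw [sub_mul, hkp, hkq]
      rw [c1_eq_zero hab hIoo hIcc _ (sub_ne_zero.mpr h1) (kp - kq) hk, zero_mul]
  · intro f hf hperp
    haveI := finI (I := I) hIcc
    haveI := finS hBS
    have hρ : (volume : Measure (ℝ × Ed n)).restrict (I ×ˢ S)
        = (volume.restrict I).prod (volume.restrict S) := vol_eq
    set f' : ℝ × Ed n → ℂ := hf.1.mk f with hf'def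
    have hf'sm : StronglyMeasurable f' := hf.1.stronglyMeasurable_mk
    have hae : f =ᵐ[volume.restrict (I ×ˢ S)] f' := hf.1.ae_eq_mk
    have hf' : MemLp f' 2 (volume.restrict (I ×ˢ S)) := hf.ae_eq hae
    have hfρ : MemLp f' 2 ((volume.restrict I).prod (volume.restrict S)) := hρ ▸ hf'
    have hfi : Integrable f' ((volume.restrict I).prod (volume.restrict S)) :=
      hfρ.integrable one_le_two
    have hIntP : ∀ p : ℝ × Ed n, Integrable
        (fun x => f' x * (starRingEnd ℂ) (expP p x))
        ((volume.restrict I).prod (volume.restrict S)) := by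
      intro p
      have hb1 : Integrable (fun x : ℝ × Ed n =>
          (starRingEnd ℂ) (expP p x) * f' x) ((volume.restrict I).prod (volume.restrict S)) :=
        hfi.bdd_mul (continuous_star.comp (expP_continuous p)).aestronglyMeasurable
          (Filter.Eventually.of_forall fun x => by rw [RCLike.norm_conj, expP_norm])
      exact hb1.congr (Filter.Eventually.of_forall fun x => mul_comm _ _)
    set Hk : ℤ → Ed n → ℂ := fun k s => ∫ t in I, f' (t, s) * eR (-(k / (b - a))) t with hHk
    have hftop : ∫⁻ x, (‖f' x‖₊ : ℝ≥0∞) ^ (2:ℝ)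
        ∂((volume.restrict I).prod (volume.restrict S)) < ∞ := by
      have h2 := hf'.2
      rw [hρ] at h2
      have h3 := (eLpNorm_lt_top_iff_lintegral_rpow_enorm_lt_top
        (by norm_num : (2:ℝ≥0∞) ≠ 0) (by norm_num : (2:ℝ≥0∞) ≠ ∞)).mp h2
      rw [show ((2:ℝ≥0∞)).toReal = (2:ℝ) by norm_num] at h3
      exact h3
    have hIuniv : volume.restrict I Set.univ ≠ ∞ := (measure_lt_top _ _).ne
    have hHsm : ∀ k : ℤ, StronglyMeasurable (Hk k) := by
      intro k
      have h1 : StronglyMeasurable (fun x : ℝ × Ed n => f' x * eR (-(k / (b - a))) x.1) :=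
        hf'sm.mul (((eR_continuous _).comp continuous_fst).stronglyMeasurable)
      exact h1.integral_prod_left'
    have hmeas2 : Measurable (fun x : ℝ × Ed n => (‖f' x‖₊ : ℝ≥0∞) ^ (2:ℝ)) :=
      hf'sm.measurable.enorm.pow_const _
    have htoR : ((2:ℝ≥0∞)).toReal = (2:ℝ) := by norm_num
    have hHmem : ∀ k : ℤ, MemLp (Hk k) 2 (volume.restrict S) := by
      intro k
      refine ⟨(hHsm k).aestronglyMeasurable, ?_⟩
      rw [eLpNorm_lt_top_iff_lintegral_rpow_enorm_lt_top
        (by norm_num : (2:ℝ≥0∞) ≠ 0) (by norm_num : (2:ℝ≥0∞) ≠ ∞), htoR]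
      have hpt : ∀ s : Ed n, (‖Hk k s‖₊ : ℝ≥0∞) ^ (2:ℝ)
          ≤ (volume.restrict I Set.univ)
            * ∫⁻ t, (‖f' (t, s)‖₊ : ℝ≥0∞) ^ (2:ℝ) ∂(volume.restrict I) := by
        intro s
        have hmeas_s : Measurable (fun t : ℝ => (‖f' (t, s)‖₊ : ℝ≥0∞)) :=
          (hf'sm.measurable.comp (measurable_id.prodMk measurable_const)).enorm
        have hb1 : (‖Hk k s‖₊ : ℝ≥0∞)
            ≤ ∫⁻ t, (‖f' (t, s)‖₊ : ℝ≥0∞) ∂(volume.restrict I) := by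
          refine le_trans (enorm_integral_le_lintegral_enorm _) (le_of_eq ?_)
          apply lintegral_congr
          intro t
          rw [enorm_mul, show ‖eR (-((k:ℝ) / (b - a))) t‖ₑ = 1 from by
            rw [← ofReal_norm, eR_norm, ENNReal.ofReal_one], mul_one]
          rfl
        have hcs := ENNReal.lintegral_mul_le_Lp_mul_Lq (volume.restrict I)
          Real.HolderConjugate.two_two
          hmeas_s.aemeasurable (aemeasurable_const (b := (1:ℝ≥0∞)))
        simp only [Pi.mul_apply, mul_one, ENNReal.one_rpow, lintegral_one] at hcs
        have hb2 : (‖Hk k s‖₊ : ℝ≥0∞)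
            ≤ ((∫⁻ t, (‖f' (t, s)‖₊ : ℝ≥0∞) ^ (2:ℝ) ∂(volume.restrict I)) ^ (1/2:ℝ))
              * ((volume.restrict I Set.univ) ^ (1/2:ℝ)) := le_trans hb1 hcs
        calc (‖Hk k s‖₊ : ℝ≥0∞) ^ (2:ℝ)
            ≤ (((∫⁻ t, (‖f' (t, s)‖₊ : ℝ≥0∞) ^ (2:ℝ) ∂(volume.restrict I)) ^ (1/2:ℝ))
              * ((volume.restrict I Set.univ) ^ (1/2:ℝ))) ^ (2:ℝ) :=
              ENNReal.rpow_le_rpow hb2 (by norm_num)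
          _ = (volume.restrict I Set.univ)
              * ∫⁻ t, (‖f' (t, s)‖₊ : ℝ≥0∞) ^ (2:ℝ) ∂(volume.restrict I) := by
              rw [ENNReal.mul_rpow_of_nonneg _ _ (by norm_num : (0:ℝ) ≤ 2),
                ← ENNReal.rpow_mul, ← ENNReal.rpow_mul]
              norm_num [mul_comm]
      calc ∫⁻ s, (‖Hk k s‖₊ : ℝ≥0∞) ^ (2:ℝ) ∂(volume.restrict S)
          ≤ ∫⁻ s, (volume.restrict I Set.univ)
              * ∫⁻ t, (‖f' (t, s)‖₊ : ℝ≥0∞) ^ (2:ℝ) ∂(volume.restrict I)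
              ∂(volume.restrict S) := lintegral_mono hpt
        _ = (volume.restrict I Set.univ) * ∫⁻ s, ∫⁻ t, (‖f' (t, s)‖₊ : ℝ≥0∞) ^ (2:ℝ)
              ∂(volume.restrict I) ∂(volume.restrict S) := lintegral_const_mul' _ _ hIuniv
        _ = (volume.restrict I Set.univ) * ∫⁻ x, (‖f' x‖₊ : ℝ≥0∞) ^ (2:ℝ)
              ∂((volume.restrict I).prod (volume.restrict S)) := by
              rw [← lintegral_prod_symm' _ hmeas2]
        _ < ∞ := ENNReal.mul_lt_top (lt_top_iff_ne_top.mpr hIuniv) hftop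
    have hHzero : ∀ k : ℤ, Hk k =ᵐ[volume.restrict S] 0 := by
      intro k
      apply hGc (Hk k) (hHmem k)
      intro g hg
      have hτ : ((k:ℝ) / (b - a)) * (b - a) = (k:ℝ) := div_mul_cancel₀ _ hba
      have hp0 := hperp ((k:ℝ) / (b - a), g) ⟨⟨k, hτ⟩, hg⟩
      have h1 : ∫ x in I ×ˢ S, f x * (starRingEnd ℂ) (expP ((k:ℝ) / (b - a), g) x)
          = ∫ x, f' x * (starRingEnd ℂ) (expP ((k:ℝ) / (b - a), g) x)
            ∂((volume.restrict I).prod (volume.restrict S)) := by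
        rw [← hρ]
        apply integral_congr_ae
        filter_upwards [hae] with x hx
        rw [hx]
      have h2 := integral_prod_symm (fun x : ℝ × Ed n =>
        f' x * (starRingEnd ℂ) (expP ((k:ℝ) / (b - a), g) x)) (hIntP _)
      have h3 : ∀ s : Ed n,
          (∫ t, f' (t, s) * (starRingEnd ℂ) (expP ((k:ℝ) / (b - a), g) (t, s))
            ∂(volume.restrict I)) = Hk k s * (starRingEnd ℂ) (expF g s) := by
        intro s
        rw [← integral_mul_const]
        apply integral_congr_ae
        refine Filter.Eventually.of_forall fun t => ?_
        beta_reduce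
        rw [expP_eq, map_mul, eR_conj]
        ring
      have h4 : ∫ s in S, Hk k s * (starRingEnd ℂ) (expF g s) = 0 := by
        rw [show (∫ s in S, Hk k s * (starRingEnd ℂ) (expF g s))
            = ∫ s, Hk k s * (starRingEnd ℂ) (expF g s) ∂(volume.restrict S) from rfl]
        rw [← integral_congr_ae (Filter.Eventually.of_forall fun s => (h3 s))]
        rw [← h2, ← h1]
        exact hp0
      exact h4
    have hsecfin : ∀ᵐ s ∂(volume.restrict S),
        ∫⁻ t, (‖f' (t, s)‖₊ : ℝ≥0∞) ^ (2:ℝ) ∂(volume.restrict I) < ∞ := by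
      apply ae_lt_top hmeas2.lintegral_prod_left'
      rw [← lintegral_prod_symm' _ hmeas2]
      exact hftop.ne
    have hallk : ∀ᵐ s ∂(volume.restrict S), ∀ k : ℤ, Hk k s = 0 :=
      (ae_all_iff).mpr fun k => hHzero k
    have hfinal : ∀ᵐ s ∂(volume.restrict S),
        (volume.restrict I) {t : ℝ | f' (t, s) ≠ 0} = 0 := by
      filter_upwards [hsecfin, hallk] with s hfin hk0
      have hsm_s : StronglyMeasurable (fun t => f' (t, s)) :=
        hf'sm.comp_measurable (measurable_id.prodMk measurable_const)
      have hmem_s : MemLp (fun t => f' (t, s)) 2 (volume.restrict (Set.Ioc a b)) := by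
        rw [← restrict_I hIoo hIcc]
        refine ⟨hsm_s.aestronglyMeasurable, ?_⟩
        rw [eLpNorm_lt_top_iff_lintegral_rpow_enorm_lt_top
          (by norm_num : (2:ℝ≥0∞) ≠ 0) (by norm_num : (2:ℝ≥0∞) ≠ ∞), htoR]
        exact hfin
      have horth_s : ∀ k : ℤ, ∫ t in Set.Ioc a b, f' (t, s) * eR (-((k:ℝ) / (b - a))) t = 0 := by
        intro k
        rw [show (volume.restrict (Set.Ioc a b)) = volume.restrict I from
          (restrict_I hIoo hIcc).symm]
        exact hk0 k
      have hzz := interval_complete hab hmem_s horth_s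
      rw [restrict_I hIoo hIcc]
      have := ae_iff.mp hzz
      simpa using this
    have hset : MeasurableSet {x : ℝ × Ed n | f' x ≠ 0} := by
      have := hf'sm.measurable (measurableSet_singleton (0:ℂ))
      exact this.compl
    have hprod0 : ((volume.restrict I).prod (volume.restrict S))
        {x : ℝ × Ed n | f' x ≠ 0} = 0 := by
      rw [Measure.prod_apply_symm hset]
      have hcongr : ∀ᵐ s ∂(volume.restrict S),
          (volume.restrict I) ((fun t => (t, s)) ⁻¹' {x : ℝ × Ed n | f' x ≠ 0}) = 0 := by
        filter_upwards [hfinal] with s hs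
        exact hs
      rw [lintegral_congr_ae hcongr]
      simp
    have hf'0 : f' =ᵐ[volume.restrict (I ×ˢ S)] 0 := by
      rw [hρ, Filter.EventuallyEq, ae_iff]
      simpa using hprod0
    exact hae.trans hf'0

end S19

theorem stmt19 {n : ℕ} (hn : 1 ≤ n) (I : Set ℝ)
    (hI : ∃ a b : ℝ, a < b ∧ Set.Ioo a b ⊆ I ∧ I ⊆ Set.Icc a b)
    (S : Set (Ed n)) (hB : Bornology.IsBounded S)
    (hM : MeasurableSet S) (hpos : 0 < volume S) :
    (∃ L : Set (ℝ × Ed n), IsSpectrumP (I ×ˢ S) L) ↔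
    (∃ G : Set (Ed n), IsSpectrum S G) := by
  obtain ⟨a, b, hab, hIoo, hIcc⟩ := hI
  constructor
  · rintro ⟨L, hL⟩
    exact S19.forward hab hIoo hIcc hB hL
  · rintro ⟨G, hG⟩
    exact S19.backward hab hIoo hIcc hB hG
end
end
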